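/- arXiv:2009.10124 — 3 statements merged into one kernel-verified Lean document; each statement's English description precedes it below -/
import Mathlib

section
/- Local approximation in operator norm from an on-site Lieb–Robinson bound (Lemma 1 of the Supplement). Fix t ∈ ℝ and suppose there are constants c₁, c₂ > 0 such that for all sites i, i' ∈ Λ and all unitaries U supported on {i} and U' supported on {i'}, ‖[e^{−iHt} U e^{iHt}, U']‖ ≤ c₁ e^{c₂|t|} (d(i,i')+1)^{−α}. Then for any X ⊆ Λ, any integer r ≥ 1, and any operator W_X supported on X with ‖W_X‖ ≤ 1, one has ‖W_X(t) − W_X(t, X[r])‖ ≤ 2 c₁ e^{c₂|t|} Σ_{i∈X[r]^c} Σ_{i'∈X} (d(i,i')+1)^{−α}. -/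
open scoped Classical ENNReal Matrix ComplexOrder
open Complex

noncomputable section

/-- Spin configurations of a lattice `Λ` of (1/2)-spins. -/
abbrev SpinConf (Λ : Type) := Λ → Fin 2

/-- Operators on the Hilbert space `⨂_{i∈Λ} ℂ²`, realized as complex matrices
indexed by spin configurations. -/
abbrev SpinOp (Λ : Type) [Fintype Λ] [DecidableEq Λ] := Matrix (SpinConf Λ) (SpinConf Λ) ℂ

section GeneralMatrices

variable {n : Type} [Fintype n] [DecidableEq n]

/-- The operator norm `‖·‖` (largest singular value). -/
noncomputable def opNorm (A : Matrix n n ℂ) : ℝ :=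
  ‖Matrix.toEuclideanCLM (𝕜 := ℂ) A‖

/-- The normalized Frobenius norm `‖O‖_F := √(tr(O†O)/tr(1̂))`. -/
noncomputable def frobNorm (A : Matrix n n ℂ) : ℝ :=
  Real.sqrt ((Aᴴ * A).trace.re / (Fintype.card n))

/-- The Schatten `p`-norm; for `p = ∞` it is the operator norm, otherwise it is the
`ℓ^p` norm of the singular values. -/
noncomputable def schattenNorm (p : ℝ≥0∞) (A : Matrix n n ℂ) : ℝ :=
  if p = ⊤ then opNorm A
  else (∑ i, Real.sqrt ((Matrix.posSemidef_conjTranspose_mul_self A).1.eigenvalues i)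
      ^ p.toReal) ^ (1 / p.toReal)

/-- The commutator `[A,B] := AB - BA`. -/
def commM (A B : Matrix n n ℂ) : Matrix n n ℂ := A * B - B * A

/-- `U` is a unitary matrix. -/
def IsUnitaryM (U : Matrix n n ℂ) : Prop := Uᴴ * U = 1 ∧ U * Uᴴ = 1

/-- Heisenberg time evolution `O(t) := e^{iHt} O e^{-iHt}`. -/
noncomputable def timeEv (H : Matrix n n ℂ) (t : ℝ) (A : Matrix n n ℂ) : Matrix n n ℂ :=
  NormedSpace.exp ((Complex.I * (t : ℂ)) • H) * A *
    NormedSpace.exp ((-(Complex.I * (t : ℂ))) • H)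

end GeneralMatrices

variable {Λ : Type} [Fintype Λ] [DecidableEq Λ]

/-- `A = A_X ⊗ 1_{X^c}`: the matrix entries vanish unless the configurations agree
outside `X`, and depend only on the configurations inside `X`. -/
def IsSupportedOn (A : SpinOp Λ) (X : Finset Λ) : Prop :=
  (∀ a b : SpinConf Λ, (∃ i ∉ X, a i ≠ b i) → A a b = 0) ∧
  (∀ a b a' b' : SpinConf Λ, (∀ i ∈ X, a i = a' i) → (∀ i ∈ X, b i = b' i) →
    (∀ i ∉ X, a i = b i) → (∀ i ∉ X, a' i = b' i) → A a b = A a' b')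

/-- The localization `(tr_{X^c}[A]/tr_{X^c}(1̂)) ⊗ 1_{X^c}` of an operator `A`
onto the subset `X` (normalized partial trace over `X^c` tensored with identity). -/
noncomputable def localize (A : SpinOp Λ) (X : Finset Λ) : SpinOp Λ := fun a b =>
  (if ∀ i ∉ X, a i = b i then (1 : ℂ) else 0) *
    (∑ c : SpinConf Λ,
      A (fun i => if i ∈ X then a i else c i) (fun i => if i ∈ X then b i else c i))
    / (2 ^ Fintype.card Λ)

/-- `d` is a metric taking nonnegative integer values. -/
def IsLatticeMetric (d : Λ → Λ → ℕ) : Prop :=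
  (∀ i j, d i j = d j i) ∧ (∀ i j, d i j = 0 ↔ i = j) ∧
    (∀ i j l, d i l ≤ d i j + d j l)

/-- The ball `i[r] := {j : d(i,j) ≤ r}`. -/
def ball (d : Λ → Λ → ℕ) (i : Λ) (r : ℕ) : Finset Λ :=
  Finset.univ.filter (fun j => d i j ≤ r)

/-- The extended set `X[r] := ⋃_{i∈X} i[r]`. -/
def extend (d : Λ → Λ → ℕ) (X : Finset Λ) (r : ℕ) : Finset Λ :=
  Finset.univ.filter (fun j => ∃ i ∈ X, d i j ≤ r)

/-- The distance from a site to a (nonempty) finite set of sites. -/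
noncomputable def distSet (d : Λ → Λ → ℕ) (i : Λ) (S : Finset Λ) : ℕ :=
  sInf {m : ℕ | ∃ j ∈ S, d i j = m}

/-- The inner boundary `∂X := {i ∈ X : d(i,X^c) = 1}`. -/
noncomputable def bdry (d : Λ → Λ → ℕ) (X : Finset Λ) : Finset Λ :=
  X.filter (fun i => distSet d i Xᶜ = 1)

/-- The layer `(∂X)_s`: the sites of `X` at distance `-s` from `∂X` when `s ≤ 0`,
and the sites of `X^c` at distance `s` from `∂X` when `s > 0`. -/
noncomputable def layer (d : Λ → Λ → ℕ) (X : Finset Λ) (s : ℤ) : Finset Λ :=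
  if s ≤ 0 then X.filter (fun i => (distSet d i (bdry d X) : ℤ) = -s)
  else Xᶜ.filter (fun i => (distSet d i (bdry d X) : ℤ) = s)

/-- The four single-site Pauli matrices `σ⁰ = 1, σˣ, σʸ, σᶻ`. -/
def pauli : Fin 4 → Matrix (Fin 2) (Fin 2) ℂ :=
  ![1, !![0, 1; 1, 0], !![0, -Complex.I; Complex.I, 0], !![1, 0; 0, -1]]

/-- A Pauli string `⨂_{i∈Λ} σ^{p(i)}`. -/
noncomputable def pauliString (p : Λ → Fin 4) : SpinOp Λ :=
  fun a b => ∏ i, pauli (p i) (a i) (b i)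

/-- The Pauli expansion coefficient `tr(P_p A)/2^{|Λ|}` of `A` at the string `p`. -/
noncomputable def pauliCoeff (A : SpinOp Λ) (p : Λ → Fin 4) : ℂ :=
  (pauliString p * A).trace / (2 ^ Fintype.card Λ)

/-- `J := 3^{k/2} J₀`. -/
noncomputable def Jconst (k : ℕ) (J₀ : ℝ) : ℝ := Real.sqrt 3 ^ k * J₀

/-- `g̃ := max(gk, λJ)` with `J = 3^{k/2} J₀`. -/
noncomputable def gTilde (k : ℕ) (J₀ g lam : ℝ) : ℝ := max (g * k) (lam * Jconst k J₀)

/-- `C₀ := 2^{α-D/2+2} J₀ γ/(2α-D-1) + (80 g̃ γ 2^{α-D/2}/(α-D)) √(2α-2D+γ)`. -/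
noncomputable def C0 (α J₀ γ : ℝ) (D : ℕ) (gt : ℝ) : ℝ :=
  (2 : ℝ) ^ (α - (D : ℝ) / 2 + 2) * J₀ * γ / (2 * α - (D : ℝ) - 1) +
    (80 * gt * γ * (2 : ℝ) ^ (α - (D : ℝ) / 2) / (α - (D : ℝ))) *
      Real.sqrt (2 * α - 2 * (D : ℝ) + γ)

end


noncomputable section LRaux
namespace LRaux
open Finset

set_option maxHeartbeats 1000000
set_option synthInstance.maxHeartbeats 400000

section MatNorm
variable {n : Type} [Fintype n] [DecidableEq n]

lemma opNorm_nonneg (A : Matrix n n ℂ) : 0 ≤ opNorm A := norm_nonneg _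
lemma opNorm_zero : opNorm (0 : Matrix n n ℂ) = 0 := by simp [opNorm, map_zero]
lemma opNorm_mul_le (A B : Matrix n n ℂ) : opNorm (A * B) ≤ opNorm A * opNorm B := by
  rw [opNorm, map_mul]; exact norm_mul_le _ _
lemma opNorm_add_le (A B : Matrix n n ℂ) : opNorm (A + B) ≤ opNorm A + opNorm B := by
  rw [opNorm, map_add]; exact norm_add_le _ _
lemma opNorm_sub_le (A B : Matrix n n ℂ) : opNorm (A - B) ≤ opNorm A + opNorm B := by
  rw [opNorm, map_sub]; exact norm_sub_le _ _
lemma opNorm_smul (c : ℂ) (A : Matrix n n ℂ) : opNorm (c • A) = ‖c‖ * opNorm A := by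
  rw [opNorm, map_smul]
  exact norm_smul c (Matrix.toEuclideanCLM (𝕜 := ℂ) A)
lemma opNorm_sum_le {ι : Type*} (s : Finset ι) (f : ι → Matrix n n ℂ) :
    opNorm (∑ i ∈ s, f i) ≤ ∑ i ∈ s, opNorm (f i) := by
  rw [opNorm, map_sum]; exact norm_sum_le _ _
lemma opNorm_unitary_le {U : Matrix n n ℂ} (h : IsUnitaryM U) : opNorm U ≤ 1 := by
  set u := Matrix.toEuclideanCLM (𝕜 := ℂ) U with hu
  have h1 : star u * u = 1 := by
    rw [hu, ← map_star, ← map_mul]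
    simp only [Matrix.star_eq_conjTranspose, h.1, map_one]
  have h2 : ‖u‖ * ‖u‖ ≤ 1 := by
    rw [← CStarRing.norm_star_mul_self, h1]
    exact ContinuousLinearMap.norm_id_le
  have : opNorm U = ‖u‖ := rfl
  nlinarith [norm_nonneg u]
lemma unitary_adj {U : Matrix n n ℂ} (h : IsUnitaryM U) : IsUnitaryM Uᴴ := by
  constructor <;> simp [Matrix.conjTranspose_conjTranspose, h.1, h.2]
lemma opNorm_conj {U V A : Matrix n n ℂ} (hU : IsUnitaryM U) (hV : IsUnitaryM V) :
    opNorm (U * A * V) = opNorm A := by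
  have le1 : ∀ (U' V' B : Matrix n n ℂ), IsUnitaryM U' → IsUnitaryM V' →
      opNorm (U' * B * V') ≤ opNorm B := by
    intro U' V' B hU' hV'
    calc opNorm (U' * B * V') ≤ opNorm (U' * B) * opNorm V' := opNorm_mul_le _ _
    _ ≤ opNorm (U' * B) * 1 := by
        have := opNorm_unitary_le hV'
        nlinarith [opNorm_nonneg (U' * B)]
    _ = opNorm (U' * B) := mul_one _
    _ ≤ opNorm U' * opNorm B := opNorm_mul_le _ _
    _ ≤ 1 * opNorm B := by
        have := opNorm_unitary_le hU'
        nlinarith [opNorm_nonneg B]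
    _ = opNorm B := one_mul _
  refine le_antisymm (le1 _ _ _ hU hV) ?_
  have hA : A = Uᴴ * (U * A * V) * Vᴴ := by
    have h1 : Uᴴ * (U * A * V) * Vᴴ = (Uᴴ * U) * A * (V * Vᴴ) := by noncomm_ring
    rw [h1, hU.1, hV.2, Matrix.one_mul, Matrix.mul_one]
  conv_lhs => rw [hA]
  exact le1 _ _ _ (unitary_adj hU) (unitary_adj hV)
lemma opNorm_mul_unitary_le {U : Matrix n n ℂ} (A : Matrix n n ℂ) (hU : IsUnitaryM U) :
    opNorm (A * U) ≤ opNorm A := by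
  calc opNorm (A * U) ≤ opNorm A * opNorm U := opNorm_mul_le _ _
  _ ≤ opNorm A * 1 := by
      have := opNorm_unitary_le hU
      nlinarith [opNorm_nonneg A]
  _ = opNorm A := mul_one _
lemma opNorm_unitary_mul_le {U : Matrix n n ℂ} (A : Matrix n n ℂ) (hU : IsUnitaryM U) :
    opNorm (U * A) ≤ opNorm A := by
  calc opNorm (U * A) ≤ opNorm U * opNorm A := opNorm_mul_le _ _
  _ ≤ 1 * opNorm A := by
      have := opNorm_unitary_le hU
      nlinarith [opNorm_nonneg A]
  _ = opNorm A := one_mul _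

lemma exp_mul_exp_neg (H : Matrix n n ℂ) (c : ℂ) :
    NormedSpace.exp (c • H) * NormedSpace.exp ((-c) • H) = 1 := by
  rw [← Matrix.exp_add_of_commute _ _ (by
    apply Commute.smul_left; apply Commute.smul_right; exact Commute.refl H)]
  rw [← add_smul, add_neg_cancel, zero_smul, NormedSpace.exp_zero]

lemma exp_conjT (H : Matrix n n ℂ) (hH : H.IsHermitian) (c : ℂ) :
    (NormedSpace.exp (c • H))ᴴ = NormedSpace.exp ((starRingEnd ℂ c) • H) := by
  rw [← Matrix.exp_conjTranspose]
  congr 1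
  rw [Matrix.conjTranspose_smul, hH.eq]
  rfl

lemma exp_unitary (H : Matrix n n ℂ) (hH : H.IsHermitian) (t : ℝ) :
    IsUnitaryM (NormedSpace.exp ((Complex.I * (t : ℂ)) • H)) := by
  have hstar : (starRingEnd ℂ) (Complex.I * (t : ℂ)) = -(Complex.I * (t : ℂ)) := by
    rw [map_mul, Complex.conj_I, Complex.conj_ofReal]; ring
  constructor
  · rw [exp_conjT H hH, hstar]
    have := exp_mul_exp_neg H (-(Complex.I * (t : ℂ)))
    rwa [neg_neg] at this
  · rw [exp_conjT H hH, hstar]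
    exact exp_mul_exp_neg H (Complex.I * (t : ℂ))

lemma timeEv_mul (H : Matrix n n ℂ) (t : ℝ) (A B : Matrix n n ℂ) :
    timeEv H t (A * B) = timeEv H t A * timeEv H t B := by
  unfold timeEv
  have h := exp_mul_exp_neg H (-(Complex.I * (t : ℂ)))
  rw [neg_neg] at h
  calc NormedSpace.exp ((Complex.I * (t:ℂ)) • H) * (A * B) * NormedSpace.exp ((-(Complex.I * (t:ℂ))) • H)
      = NormedSpace.exp ((Complex.I * (t:ℂ)) • H) * A *
        (NormedSpace.exp ((-(Complex.I * (t:ℂ))) • H) * NormedSpace.exp ((Complex.I * (t:ℂ)) • H)) *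
        B * NormedSpace.exp ((-(Complex.I * (t:ℂ))) • H) := by rw [h]; noncomm_ring
    _ = _ := by noncomm_ring

lemma timeEv_sub (H : Matrix n n ℂ) (t : ℝ) (A B : Matrix n n ℂ) :
    timeEv H t (A - B) = timeEv H t A - timeEv H t B := by
  unfold timeEv; noncomm_ring

lemma timeEv_one (H : Matrix n n ℂ) (t : ℝ) : timeEv H t (1 : Matrix n n ℂ) = 1 := by
  unfold timeEv
  rw [Matrix.mul_one]
  exact exp_mul_exp_neg H _

lemma timeEv_neg_coe (H : Matrix n n ℂ) (t : ℝ) (A : Matrix n n ℂ) :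
    timeEv H (-t) A = NormedSpace.exp ((-(Complex.I * (t : ℂ))) • H) * A *
      NormedSpace.exp ((Complex.I * (t : ℂ)) • H) := by
  unfold timeEv
  have h1 : (Complex.I * ((-t : ℝ) : ℂ)) = -(Complex.I * (t : ℂ)) := by push_cast; ring
  rw [h1, neg_neg]

lemma timeEv_timeEv_neg (H : Matrix n n ℂ) (t : ℝ) (A : Matrix n n ℂ) :
    timeEv H t (timeEv H (-t) A) = A := by
  rw [timeEv_neg_coe]
  unfold timeEv
  have h1 := exp_mul_exp_neg H (Complex.I * (t : ℂ))
  calc NormedSpace.exp ((Complex.I * (t:ℂ)) • H) *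
      (NormedSpace.exp ((-(Complex.I * (t:ℂ))) • H) * A * NormedSpace.exp ((Complex.I * (t:ℂ)) • H)) *
      NormedSpace.exp ((-(Complex.I * (t:ℂ))) • H)
      = (NormedSpace.exp ((Complex.I * (t:ℂ)) • H) * NormedSpace.exp ((-(Complex.I * (t:ℂ))) • H)) * A *
        (NormedSpace.exp ((Complex.I * (t:ℂ)) • H) * NormedSpace.exp ((-(Complex.I * (t:ℂ))) • H)) := by
          noncomm_ring
    _ = A := by rw [h1]; simp

lemma opNorm_timeEv (H : Matrix n n ℂ) (hH : H.IsHermitian) (t : ℝ) (A : Matrix n n ℂ) :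
    opNorm (timeEv H t A) = opNorm A := by
  have hV : IsUnitaryM (NormedSpace.exp ((-(Complex.I * (t:ℂ))) • H)) := by
    have h1 : (-(Complex.I * (t:ℂ))) = Complex.I * ((-t : ℝ) : ℂ) := by push_cast; ring
    rw [h1]
    exact exp_unitary H hH (-t)
  exact opNorm_conj (exp_unitary H hH t) hV

lemma commM_mul (A B C : Matrix n n ℂ) :
    commM A (B * C) = commM A B * C + B * commM A C := by
  unfold commM; noncomm_ring

end MatNorm

section Spin
variable {Λ : Type} [Fintype Λ] [DecidableEq Λ]

/-- generic tensor operator -/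
def tensorOp (f : Λ → Matrix (Fin 2) (Fin 2) ℂ) : SpinOp Λ := fun a b => ∏ i, f i (a i) (b i)

lemma pauliString_eq_tensorOp (p : Λ → Fin 4) :
    pauliString p = tensorOp (fun i => pauli (p i)) := rfl

lemma tensorOp_mul (f g : Λ → Matrix (Fin 2) (Fin 2) ℂ) :
    tensorOp f * tensorOp g = tensorOp (fun i => f i * g i) := by
  ext a b
  rw [Matrix.mul_apply]
  have h1 : ∀ c : SpinConf Λ, tensorOp f a c * tensorOp g c b
      = ∏ i, (f i (a i) (c i) * g i (c i) (b i)) := by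
    intro c; rw [tensorOp, tensorOp, ← Finset.prod_mul_distrib]
  simp_rw [h1]
  have h2 : (tensorOp (fun i => f i * g i)) a b = ∏ i, ∑ x : Fin 2, f i (a i) x * g i x (b i) := by
    simp [tensorOp, Matrix.mul_apply]
  rw [h2, Finset.prod_univ_sum (fun _ => (Finset.univ : Finset (Fin 2)))
    (fun i x => f i (a i) x * g i x (b i)), Fintype.piFinset_univ]

lemma tensorOp_one : tensorOp (fun _ : Λ => (1 : Matrix (Fin 2) (Fin 2) ℂ)) = 1 := by
  ext a b
  simp only [tensorOp, Matrix.one_apply]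
  by_cases h : a = b
  · subst h; simp
  · have hex : ∃ i, a i ≠ b i := by
      by_contra hc; push_neg at hc; exact h (funext hc)
    obtain ⟨i, hi⟩ := hex
    rw [if_neg h]
    exact Finset.prod_eq_zero (Finset.mem_univ i) (if_neg hi)

lemma pauli_mul_self (μ : Fin 4) : pauli μ * pauli μ = 1 := by
  fin_cases μ <;>
    · ext a b
      fin_cases a <;> fin_cases b <;>
        simp [pauli, Matrix.mul_apply, Fin.sum_univ_two, Matrix.one_apply]

lemma pauli_conj (μ : Fin 4) (a b : Fin 2) : (starRingEnd ℂ) (pauli μ a b) = pauli μ b a := by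
  fin_cases μ <;> fin_cases a <;> fin_cases b <;>
    simp [pauli, Matrix.one_apply]

lemma pauli_zero : pauli 0 = 1 := rfl

lemma pauli_twirl (a b x y : Fin 2) :
    ∑ μ : Fin 4, pauli μ a x * pauli μ y b
      = 2 * (if a = b then 1 else 0) * (if x = y then 1 else 0) := by
  fin_cases a <;> fin_cases b <;> fin_cases x <;> fin_cases y <;>
    simp [pauli, Fin.sum_univ_four, Matrix.one_apply] <;> ring

lemma pauliString_zero : pauliString (fun _ : Λ => (0 : Fin 4)) = 1 := by
  rw [pauliString_eq_tensorOp]; exact tensorOp_one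

lemma pauliString_herm (p : Λ → Fin 4) : (pauliString p)ᴴ = pauliString p := by
  ext a b
  simp only [Matrix.conjTranspose_apply, pauliString, star_def, map_prod]
  exact Finset.prod_congr rfl fun i _ => pauli_conj _ _ _

lemma pauliString_mul_self (p : Λ → Fin 4) : pauliString p * pauliString p = 1 := by
  rw [pauliString_eq_tensorOp, tensorOp_mul]
  simp_rw [pauli_mul_self]
  exact tensorOp_one

lemma pauliString_unitary (p : Λ → Fin 4) : IsUnitaryM (pauliString p) := by
  constructor <;> rw [pauliString_herm] <;> exact pauliString_mul_self p

/-- single-site string -/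
def sing (i : Λ) (μ : Fin 4) : Λ → Fin 4 := fun j => if j = i then μ else 0

lemma pauliString_decomp (p : Λ → Fin 4) (j : Λ) :
    pauliString p = pauliString (Function.update p j 0) * pauliString (sing j (p j)) := by
  rw [pauliString_eq_tensorOp, pauliString_eq_tensorOp, pauliString_eq_tensorOp, tensorOp_mul]
  have hfun : (fun i : Λ => pauli (p i))
      = fun i => pauli (Function.update p j 0 i) * pauli (sing j (p j) i) := by
    funext i
    by_cases h : i = j
    · subst h; simp [Function.update_self, sing, pauli_zero]
    · simp [Function.update_of_ne h, sing, h, pauli_zero]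
  exact congrArg tensorOp hfun

lemma pauliString_sing_apply (i : Λ) (μ : Fin 4) (a b : SpinConf Λ) :
    pauliString (sing i μ) a b
      = pauli μ (a i) (b i) * ∏ j ∈ Finset.univ.erase i, (if a j = b j then (1:ℂ) else 0) := by
  rw [pauliString, ← Finset.mul_prod_erase Finset.univ _ (Finset.mem_univ i)]
  congr 1
  · simp [sing]
  · refine Finset.prod_congr rfl fun j hj => ?_
    have hji : j ≠ i := (Finset.mem_erase.mp hj).1
    simp [sing, hji, pauli_zero, Matrix.one_apply]

lemma supported_sing (i : Λ) (μ : Fin 4) :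
    IsSupportedOn (pauliString (sing i μ)) {i} := by
  constructor
  · rintro a b ⟨j, hj, hne⟩
    rw [pauliString_sing_apply]
    have hj' : j ∈ Finset.univ.erase i := Finset.mem_erase.mpr ⟨by simpa using hj, Finset.mem_univ j⟩
    rw [show (∏ j ∈ Finset.univ.erase i, if a j = b j then (1:ℂ) else 0) = 0 from
      Finset.prod_eq_zero hj' (if_neg hne), mul_zero]
  · intro a b a' b' ha hb hab ha'b'
    rw [pauliString_sing_apply, pauliString_sing_apply]
    have hai : a i = a' i := ha i (Finset.mem_singleton_self i)
    have hbi : b i = b' i := hb i (Finset.mem_singleton_self i)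
    rw [hai, hbi]
    congr 1
    rw [Finset.prod_eq_one fun j hj => if_pos (hab j (by
        simpa using (Finset.mem_erase.mp hj).1)),
      Finset.prod_eq_one fun j hj => if_pos (ha'b' j (by
        simpa using (Finset.mem_erase.mp hj).1))]

lemma supported_localize (A : SpinOp Λ) (Y : Finset Λ) :
    IsSupportedOn (localize A Y) Y := by
  constructor
  · rintro a b ⟨i, hi, hne⟩
    rw [localize, if_neg (by push_neg; exact ⟨i, hi, hne⟩)]
    simp
  · intro a b a' b' ha hb hab ha'b'
    rw [localize, localize, if_pos hab, if_pos ha'b']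
    congr 2
    refine Finset.sum_congr rfl fun c _ => ?_
    congr 1 <;> funext i <;> by_cases hi : i ∈ Y
    · simp [hi, ha i hi]
    · simp [hi]
    · simp [hi, hb i hi]
    · simp [hi]

lemma disjoint_comm (W L : SpinOp Λ) (X : Finset Λ)
    (hW : IsSupportedOn W X) (hL : IsSupportedOn L Xᶜ) : W * L = L * W := by
  ext a b
  rw [Matrix.mul_apply, Matrix.mul_apply]
  set c₀ : SpinConf Λ := fun i => if i ∈ X then b i else a i with hc₀
  set c₁ : SpinConf Λ := fun i => if i ∈ X then a i else b i with hc₁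
  have hs0 : (∑ c : SpinConf Λ, W a c * L c b) = W a c₀ * L c₀ b := by
    apply Finset.sum_eq_single c₀
    · intro c _ hne
      have hex : ∃ i, c i ≠ c₀ i := by
        by_contra hc; push_neg at hc; exact hne (funext hc)
      obtain ⟨i, hi⟩ := hex
      by_cases hiX : i ∈ X
      · have hcb : c i ≠ b i := by simpa [hc₀, hiX] using hi
        rw [hL.1 c b ⟨i, by simpa using hiX, hcb⟩, mul_zero]
      · have hca : c i ≠ a i := by simpa [hc₀, hiX] using hi
        rw [hW.1 a c ⟨i, hiX, Ne.symm hca⟩, zero_mul]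
    · intro hmem; exact absurd (Finset.mem_univ _) hmem
  have hs1 : (∑ c : SpinConf Λ, L a c * W c b) = L a c₁ * W c₁ b := by
    apply Finset.sum_eq_single c₁
    · intro c _ hne
      have hex : ∃ i, c i ≠ c₁ i := by
        by_contra hc; push_neg at hc; exact hne (funext hc)
      obtain ⟨i, hi⟩ := hex
      by_cases hiX : i ∈ X
      · have hca : c i ≠ a i := by simpa [hc₁, hiX] using hi
        rw [hL.1 a c ⟨i, by simpa using hiX, Ne.symm hca⟩, zero_mul]
      · have hcb : c i ≠ b i := by simpa [hc₁, hiX] using hi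
        rw [hW.1 c b ⟨i, hiX, hcb⟩, mul_zero]
    · intro hmem; exact absurd (Finset.mem_univ _) hmem
  rw [hs0, hs1]
  have hWeq : W a c₀ = W c₁ b := by
    refine hW.2 a c₀ c₁ b (fun i hi => by simp [hc₁, hi]) (fun i hi => by simp [hc₀, hi])
      (fun i hi => by simp [hc₀, hi]) (fun i hi => by simp [hc₁, hi])
  have hLeq : L c₀ b = L a c₁ := by
    refine hL.2 c₀ b a c₁ (fun i hi => ?_) (fun i hi => ?_) (fun i hi => ?_) (fun i hi => ?_)
    · have := Finset.mem_compl.mp hi; simp [hc₀, this]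
    · have := Finset.mem_compl.mp hi; simp [hc₁, this]
    · have : i ∈ X := by simpa using hi
      simp [hc₀, this]
    · have : i ∈ X := by simpa using hi
      simp [hc₁, this]
  rw [hWeq, hLeq]
  ring

def fixEquiv {β : Type} (Y : Finset Λ) (u : Λ → β) :
    {c : Λ → β // ∀ i ∈ Y, c i = u i} ≃ ({i : Λ // i ∉ Y} → β) where
  toFun c i := c.1 i.1
  invFun g := ⟨fun i => if h : i ∈ Y then u i else g ⟨i, h⟩, fun i hi => by simp [hi]⟩
  left_inv c := by
    ext i
    by_cases h : i ∈ Y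
    · simp [h, c.2 i h]
    · simp [h]
  right_inv g := by
    ext i
    simp [i.2]

lemma card_fix {β : Type} [Fintype β] [DecidableEq β] (Y : Finset Λ) (u : Λ → β) :
    (Finset.univ.filter (fun c : Λ → β => ∀ i ∈ Y, c i = u i)).card
      = (Fintype.card β) ^ Yᶜ.card := by
  rw [← Fintype.card_subtype, Fintype.card_congr (fixEquiv Y u), Fintype.card_fun]
  congr 1
  rw [Fintype.card_subtype]
  congr 1
  ext i
  simp

lemma sum_mix {Y : Finset Λ} (a : SpinConf Λ) (g : SpinConf Λ → ℂ) :
    ∑ e : SpinConf Λ, g (fun i => if i ∈ Y then a i else e i)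
      = (2 : ℂ) ^ Y.card *
        ∑ c ∈ Finset.univ.filter (fun c : SpinConf Λ => ∀ i ∈ Y, c i = a i), g c := by
  rw [Finset.sum_comp g (fun e : SpinConf Λ => (fun i => if i ∈ Y then a i else e i))]
  have himg : Finset.image (fun e : SpinConf Λ => (fun i => if i ∈ Y then a i else e i))
      Finset.univ = Finset.univ.filter (fun c : SpinConf Λ => ∀ i ∈ Y, c i = a i) := by
    ext c
    simp only [Finset.mem_image, Finset.mem_filter, Finset.mem_univ, true_and]
    constructor
    · rintro ⟨e, rfl⟩ i hi; simp [hi]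
    · intro h
      refine ⟨c, funext fun i => ?_⟩
      by_cases hi : i ∈ Y
      · simp [hi, (h i hi).symm]
      · simp [hi]
  rw [himg, Finset.mul_sum]
  refine Finset.sum_congr rfl fun c hc => ?_
  simp only [Finset.mem_filter, Finset.mem_univ, true_and] at hc
  have hfib : Finset.univ.filter
      (fun e : SpinConf Λ => (fun i => if i ∈ Y then a i else e i) = c)
      = Finset.univ.filter (fun e : SpinConf Λ => ∀ i ∈ Yᶜ, e i = c i) := by
    ext e
    simp only [Finset.mem_filter, Finset.mem_univ, true_and, Finset.mem_compl]
    constructor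
    · rintro rfl i hi; simp [hi]
    · intro h
      funext i
      by_cases hi : i ∈ Y
      · simp [hi, hc i hi]
      · simp [hi, h i hi]
  rw [hfib, card_fix Yᶜ c, compl_compl]
  simp [nsmul_eq_mul]

set_option maxHeartbeats 2000000 in
lemma twirl (A : SpinOp Λ) (Y : Finset Λ) :
    ∑ p ∈ Finset.univ.filter (fun p : Λ → Fin 4 => ∀ i ∈ Y, p i = 0),
      pauliString p * A * pauliString p = ((4 : ℂ) ^ Yᶜ.card) • localize A Y := by
  classical
  set m := Yᶜ.card with hm
  set S := Finset.univ.filter (fun p : Λ → Fin 4 => ∀ i ∈ Y, p i = 0) with hSdef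
  ext a b
  have step1 : ∀ p : Λ → Fin 4, (pauliString p * A * pauliString p) a b
      = ∑ c : SpinConf Λ, ∑ c' : SpinConf Λ,
          pauliString p a c * A c c' * pauliString p c' b := by
    intro p
    rw [Matrix.mul_apply]
    simp_rw [Matrix.mul_apply, Finset.sum_mul]
    rw [Finset.sum_comm]
  have step2 : (∑ p ∈ S, pauliString p * A * pauliString p) a b
      = ∑ c : SpinConf Λ, ∑ c' : SpinConf Λ, A c c' *
          (∑ p ∈ S, pauliString p a c * pauliString p c' b) := by
    rw [Matrix.sum_apply]
    simp_rw [step1]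
    rw [Finset.sum_comm]
    refine Finset.sum_congr rfl fun c _ => ?_
    rw [Finset.sum_comm]
    refine Finset.sum_congr rfl fun c' _ => ?_
    rw [Finset.mul_sum]
    refine Finset.sum_congr rfl fun p _ => by ring
  have hker : ∀ c c' : SpinConf Λ,
      (∑ p ∈ S, pauliString p a c * pauliString p c' b)
      = (2:ℂ)^m * (if ∀ i ∈ Yᶜ, a i = b i then 1 else 0)
        * ((if ∀ i ∈ Y, a i = c i then 1 else 0) * ((if ∀ i ∈ Y, c' i = b i then 1 else 0)
           * (if ∀ i ∈ Yᶜ, c i = c' i then 1 else 0))) := by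
    intro c c'
    have hprod : ∀ p : Λ → Fin 4, pauliString p a c * pauliString p c' b
        = ∏ i, (pauli (p i) (a i) (c i) * pauli (p i) (c' i) (b i)) := by
      intro p
      rw [pauliString, pauliString, ← Finset.prod_mul_distrib]
    simp_rw [hprod]
    have hS : S = Fintype.piFinset (fun i => if i ∈ Y then ({0} : Finset (Fin 4))
        else Finset.univ) := by
      ext p
      simp only [hSdef, Finset.mem_filter, Finset.mem_univ, true_and, Fintype.mem_piFinset]
      constructor
      · intro h i
        by_cases hi : i ∈ Y
        · simp [hi, h i hi]
        · simp [hi]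
      · intro h i hi
        have := h i
        simpa [hi] using this
    rw [hS, ← Finset.prod_univ_sum (fun i => if i ∈ Y then ({0} : Finset (Fin 4)) else Finset.univ)
      (fun i μ => pauli μ (a i) (c i) * pauli μ (c' i) (b i))]
    have hfac : ∀ i : Λ, (∑ μ ∈ (if i ∈ Y then ({0} : Finset (Fin 4)) else Finset.univ),
          pauli μ (a i) (c i) * pauli μ (c' i) (b i))
        = if i ∈ Y then ((if a i = c i then 1 else 0) * (if c' i = b i then 1 else 0))
          else (2 * (if a i = b i then 1 else 0) * (if c i = c' i then 1 else 0)) := by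
      intro i
      by_cases hi : i ∈ Y
      · simp only [hi, if_true, Finset.sum_singleton]
        show (1 : Matrix (Fin 2) (Fin 2) ℂ) (a i) (c i) * (1 : Matrix (Fin 2) (Fin 2) ℂ) (c' i) (b i) = _
        rw [Matrix.one_apply, Matrix.one_apply]
      · simp only [hi, if_false]
        exact pauli_twirl (a i) (b i) (c i) (c' i)
    simp_rw [hfac]
    rw [← Finset.prod_mul_prod_compl Y]
    have hY : (∏ i ∈ Y, if i ∈ Y then ((if a i = c i then (1:ℂ) else 0) * (if c' i = b i then 1 else 0))
          else (2 * (if a i = b i then 1 else 0) * (if c i = c' i then 1 else 0)))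
        = (if ∀ i ∈ Y, a i = c i then 1 else 0) * (if ∀ i ∈ Y, c' i = b i then 1 else 0) := by
      rw [Finset.prod_congr rfl (fun i hi => if_pos hi)]
      by_cases h1 : ∀ i ∈ Y, a i = c i
      · by_cases h2 : ∀ i ∈ Y, c' i = b i
        · rw [if_pos h1, if_pos h2, Finset.prod_eq_one fun i hi => by
            rw [if_pos (h1 i hi), if_pos (h2 i hi), one_mul]]
          norm_num
        · push_neg at h2
          obtain ⟨i, hi, hne⟩ := h2
          rw [Finset.prod_eq_zero hi (by rw [if_neg hne, mul_zero])]
          rw [show (if ∀ i ∈ Y, c' i = b i then (1:ℂ) else 0) = 0 from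
            if_neg (by push_neg; exact ⟨i, hi, hne⟩)]
          ring
      · push_neg at h1
        obtain ⟨i, hi, hne⟩ := h1
        rw [Finset.prod_eq_zero hi (by rw [if_neg hne, zero_mul])]
        rw [if_neg (by push_neg; exact ⟨i, hi, hne⟩)]
        ring
    have hYc : (∏ i ∈ Yᶜ, if i ∈ Y then ((if a i = c i then (1:ℂ) else 0) * (if c' i = b i then 1 else 0))
          else (2 * (if a i = b i then 1 else 0) * (if c i = c' i then 1 else 0)))
        = (2:ℂ)^m * (if ∀ i ∈ Yᶜ, a i = b i then 1 else 0) * (if ∀ i ∈ Yᶜ, c i = c' i then 1 else 0) := by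
      rw [Finset.prod_congr rfl (fun i hi => if_neg (by simpa using (Finset.mem_compl.mp hi)))]
      by_cases h1 : ∀ i ∈ Yᶜ, a i = b i
      · by_cases h2 : ∀ i ∈ Yᶜ, c i = c' i
        · rw [if_pos h1, if_pos h2, Finset.prod_congr rfl (fun i hi => by
            rw [if_pos (h1 i hi), if_pos (h2 i hi), mul_one, mul_one]),
            Finset.prod_const, hm]
          ring
        · push_neg at h2
          obtain ⟨i, hi, hne⟩ := h2
          rw [Finset.prod_eq_zero hi (by rw [if_neg hne, mul_zero])]
          rw [show (if ∀ i ∈ Yᶜ, c i = c' i then (1:ℂ) else 0) = 0 from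
            if_neg (by push_neg; exact ⟨i, hi, hne⟩)]
          ring
      · push_neg at h1
        obtain ⟨i, hi, hne⟩ := h1
        rw [Finset.prod_eq_zero hi (by rw [if_neg hne, mul_zero, zero_mul])]
        rw [if_neg (by push_neg; exact ⟨i, hi, hne⟩)]
        ring
    rw [hY, hYc]
    ring
  rw [step2]
  simp_rw [hker]
  rw [Matrix.smul_apply, localize, smul_eq_mul]
  by_cases hab : ∀ i ∉ Y, a i = b i
  · have hab' : (∀ i ∈ Yᶜ, a i = b i) := fun i hi => hab i (Finset.mem_compl.mp hi)
    rw [if_pos hab, if_pos hab']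
    have hcollapse : ∀ c : SpinConf Λ,
        (∑ c' : SpinConf Λ, A c c' * ((2:ℂ)^m * 1 *
          ((if ∀ i ∈ Y, a i = c i then 1 else 0) * ((if ∀ i ∈ Y, c' i = b i then 1 else 0)
           * (if ∀ i ∈ Yᶜ, c i = c' i then 1 else 0)))))
        = A c (fun i => if i ∈ Y then b i else c i) * ((2:ℂ)^m *
            (if ∀ i ∈ Y, a i = c i then 1 else 0)) := by
      intro c
      rw [Finset.sum_eq_single (fun i => if i ∈ Y then b i else c i)]
      · have h1 : (∀ i ∈ Y, (if i ∈ Y then b i else c i) = b i) := fun i hi => if_pos hi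
        have h2 : (∀ i ∈ Yᶜ, c i = (if i ∈ Y then b i else c i)) := fun i hi => by
          rw [if_neg (Finset.mem_compl.mp hi)]
        rw [if_pos h1, if_pos h2]
        ring
      · intro c' _ hne
        have hcon : ¬((∀ i ∈ Y, c' i = b i) ∧ (∀ i ∈ Yᶜ, c i = c' i)) := by
          rintro ⟨hA, hB⟩
          apply hne
          funext i
          by_cases hi : i ∈ Y
          · rw [if_pos hi]; exact hA i hi
          · rw [if_neg hi]; exact (hB i (Finset.mem_compl.mpr hi)).symm
        by_cases hA : ∀ i ∈ Y, c' i = b i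
        · have hB : ¬(∀ i ∈ Yᶜ, c i = c' i) := fun hB => hcon ⟨hA, hB⟩
          rw [if_neg hB]; ring
        · rw [if_neg hA]; ring
      · intro h
        exact absurd (Finset.mem_univ _) h
    simp_rw [hcollapse]
    have hrhs : (∑ e : SpinConf Λ, A (fun i => if i ∈ Y then a i else e i)
          (fun i => if i ∈ Y then b i else e i))
        = (2:ℂ)^Y.card * ∑ c ∈ Finset.univ.filter (fun c : SpinConf Λ => ∀ i ∈ Y, c i = a i),
            A c (fun i => if i ∈ Y then b i else c i) := by
      have hsm := sum_mix (Y := Y) a (fun c => A c (fun i => if i ∈ Y then b i else c i))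
      rw [← hsm]
      refine Finset.sum_congr rfl fun e _ => ?_
      congr 1
      funext i
      by_cases hi : i ∈ Y <;> simp [hi]
    rw [hrhs]
    have hlhs : (∑ c : SpinConf Λ, A c (fun i => if i ∈ Y then b i else c i) * ((2:ℂ)^m *
            (if ∀ i ∈ Y, a i = c i then 1 else 0)))
        = (2:ℂ)^m * ∑ c ∈ Finset.univ.filter (fun c : SpinConf Λ => ∀ i ∈ Y, c i = a i),
            A c (fun i => if i ∈ Y then b i else c i) := by
      rw [Finset.mul_sum, Finset.sum_filter]
      refine Finset.sum_congr rfl fun c _ => ?_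
      by_cases h : ∀ i ∈ Y, c i = a i
      · rw [if_pos h, if_pos (fun i hi => (h i hi).symm)]
        ring
      · rw [if_neg h, if_neg (fun h2 : ∀ i ∈ Y, a i = c i => h (fun i hi => (h2 i hi).symm))]
        ring
    rw [hlhs]
    have hcard : Fintype.card Λ = Y.card + m := by
      rw [hm, ← Finset.card_add_card_compl Y]
    rw [hcard]
    have h4 : (4:ℂ) = 2 * 2 := by norm_num
    rw [h4, mul_pow, pow_add]
    have h2 : (2:ℂ) ≠ 0 := two_ne_zero
    field_simp
  · have hab' : ¬(∀ i ∈ Yᶜ, a i = b i) := fun h => hab (fun i hi => h i (Finset.mem_compl.mpr hi))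
    rw [if_neg hab, if_neg hab']
    simp

lemma comm_pauliString_le (A : SpinOp Λ) (h : Λ → ℝ) (s : Finset Λ) :
    ∀ p : Λ → Fin 4, (∀ i, p i ≠ 0 → i ∈ s) →
    (∀ i ∈ s, ∀ μ : Fin 4, opNorm (commM A (pauliString (sing i μ))) ≤ h i) →
    opNorm (commM A (pauliString p)) ≤ ∑ i ∈ s, h i := by
  induction s using Finset.induction_on with
  | empty =>
    intro p hp _
    have hzero : p = fun _ => (0 : Fin 4) := funext fun i => by
      by_contra hne
      simpa using hp i hne
    rw [hzero, pauliString_zero]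
    have : commM A (1 : SpinOp Λ) = 0 := by unfold commM; noncomm_ring
    rw [this, Finset.sum_empty, opNorm_zero]
  | @insert j s hj ih =>
    intro p hp hb
    set q := Function.update p j 0 with hq
    have hq' : ∀ i, q i ≠ 0 → i ∈ s := by
      intro i hi
      have hij : i ≠ j := by
        intro hh; subst hh; apply hi; rw [hq, Function.update_self]
      have : q i = p i := by rw [hq, Function.update_of_ne hij]
      rw [this] at hi
      rcases Finset.mem_insert.mp (hp i hi) with h1 | h1
      · exact absurd h1 hij
      · exact h1
    have hbs : ∀ i ∈ s, ∀ μ : Fin 4, opNorm (commM A (pauliString (sing i μ))) ≤ h i :=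
      fun i hi => hb i (Finset.mem_insert_of_mem hi)
    have hdec := pauliString_decomp p j
    rw [hdec, commM_mul]
    calc opNorm (commM A (pauliString q) * pauliString (sing j (p j))
          + pauliString q * commM A (pauliString (sing j (p j))))
        ≤ opNorm (commM A (pauliString q) * pauliString (sing j (p j)))
          + opNorm (pauliString q * commM A (pauliString (sing j (p j)))) := opNorm_add_le _ _
      _ ≤ opNorm (commM A (pauliString q)) + opNorm (commM A (pauliString (sing j (p j)))) := by
          gcongr
          · exact opNorm_mul_unitary_le _ (pauliString_unitary _)
          · exact opNorm_unitary_mul_le _ (pauliString_unitary _)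
      _ ≤ (∑ i ∈ s, h i) + h j := by
          gcongr
          · exact ih q hq' hbs
          · exact hb j (Finset.mem_insert_self j s) (p j)
      _ = ∑ i ∈ insert j s, h i := by rw [Finset.sum_insert hj]; ring

lemma localize_bound (A : SpinOp Λ) (Y : Finset Λ) (h : Λ → ℝ)
    (hb : ∀ i ∈ Yᶜ, ∀ μ : Fin 4, opNorm (commM A (pauliString (sing i μ))) ≤ h i) :
    opNorm (A - localize A Y) ≤ ∑ i ∈ Yᶜ, h i := by
  classical
  set m := Yᶜ.card with hm
  set S := Finset.univ.filter (fun p : Λ → Fin 4 => ∀ i ∈ Y, p i = 0) with hSdef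
  have hcardS : S.card = 4 ^ m := by
    have := card_fix (β := Fin 4) Y (fun _ => (0 : Fin 4))
    simpa [hSdef, hm] using this
  have hsum : ∑ p ∈ S, (A - pauliString p * A * pauliString p)
      = ((4:ℂ)^m) • (A - localize A Y) := by
    rw [Finset.sum_sub_distrib, twirl A Y, Finset.sum_const, hcardS, smul_sub]
    congr 1
    rw [← Nat.cast_smul_eq_nsmul ℂ]
    push_cast
    norm_num
  have h4m : ((4:ℂ)^m) ≠ 0 := by positivity
  have hD : A - localize A Y
      = ((4:ℂ)^m)⁻¹ • ∑ p ∈ S, (A - pauliString p * A * pauliString p) := by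
    rw [hsum, smul_smul, inv_mul_cancel₀ h4m, one_smul]
  rw [hD, opNorm_smul]
  have hnorm4 : ‖((4:ℂ)^m)⁻¹‖ = ((4:ℝ)^m)⁻¹ := by
    rw [norm_inv, norm_pow]
    norm_num
  rw [hnorm4]
  have hterm : ∀ p ∈ S, opNorm (A - pauliString p * A * pauliString p) ≤ ∑ i ∈ Yᶜ, h i := by
    intro p hpS
    have hsupp : ∀ i, p i ≠ 0 → i ∈ Yᶜ := by
      intro i hi
      rw [Finset.mem_compl]
      intro hiY
      exact hi ((Finset.mem_filter.mp hpS).2 i hiY)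
    have heq : A - pauliString p * A * pauliString p = commM A (pauliString p) * pauliString p := by
      have hps := pauliString_mul_self p
      unfold commM
      rw [sub_mul]
      rw [Matrix.mul_assoc A (pauliString p) (pauliString p), hps, Matrix.mul_one]
    rw [heq]
    calc opNorm (commM A (pauliString p) * pauliString p)
        ≤ opNorm (commM A (pauliString p)) := opNorm_mul_unitary_le _ (pauliString_unitary _)
      _ ≤ ∑ i ∈ Yᶜ, h i := comm_pauliString_le A h Yᶜ p hsupp hb
  calc ((4:ℝ)^m)⁻¹ * opNorm (∑ p ∈ S, (A - pauliString p * A * pauliString p))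
      ≤ ((4:ℝ)^m)⁻¹ * ∑ p ∈ S, opNorm (A - pauliString p * A * pauliString p) := by
        have := opNorm_sum_le S (fun p => A - pauliString p * A * pauliString p)
        have h4pos : (0:ℝ) < ((4:ℝ)^m)⁻¹ := by positivity
        nlinarith
    _ ≤ ((4:ℝ)^m)⁻¹ * ∑ p ∈ S, (∑ i ∈ Yᶜ, h i) := by
        have h4pos : (0:ℝ) ≤ ((4:ℝ)^m)⁻¹ := by positivity
        have := Finset.sum_le_sum hterm
        nlinarith
    _ = ∑ i ∈ Yᶜ, h i := by
        rw [Finset.sum_const, hcardS, nsmul_eq_mul]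
        push_cast
        rw [← mul_assoc, inv_mul_cancel₀ (by positivity : ((4:ℝ)^m) ≠ 0), one_mul]

end Spin
end LRaux
end LRaux

/-- **Local approximation in operator norm from an on-site Lieb–Robinson bound**
(Lemma 1 of the Supplement). -/
theorem local_approximation_from_onsite_LR
    {Λ : Type} [Fintype Λ] [DecidableEq Λ] (d : Λ → Λ → ℕ)
    (hmet : IsLatticeMetric d) (α : ℝ) (hα : 0 < α)
    (H : SpinOp Λ) (hH : H.IsHermitian) (t : ℝ)
    (c₁ c₂ : ℝ) (hc₁ : 0 < c₁) (hc₂ : 0 < c₂)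
    (hLR : ∀ (i i' : Λ) (U U' : SpinOp Λ),
      IsUnitaryM U → IsSupportedOn U {i} → IsUnitaryM U' → IsSupportedOn U' {i'} →
      opNorm (commM (timeEv H (-t) U) U')
        ≤ c₁ * Real.exp (c₂ * |t|) * ((d i i' : ℝ) + 1) ^ (-α))
    (X : Finset Λ) (r : ℕ) (hr : 1 ≤ r)
    (W : SpinOp Λ) (hWs : IsSupportedOn W X) (hWn : opNorm W ≤ 1) :
    opNorm (timeEv H t W - localize (timeEv H t W) (extend d X r))
      ≤ 2 * c₁ * Real.exp (c₂ * |t|) *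
          ∑ i ∈ (extend d X r)ᶜ, ∑ i' ∈ X, ((d i i' : ℝ) + 1) ^ (-α) := by
  classical
  set Y := extend d X r with hY
  set E := Real.exp (c₂ * |t|) with hE
  set A := timeEv H t W with hA
  have hkey : ∀ i ∈ Yᶜ, ∀ μ : Fin 4,
      opNorm (commM A (pauliString (LRaux.sing i μ)))
        ≤ 2 * ∑ i' ∈ X, c₁ * E * ((d i i' : ℝ) + 1) ^ (-α) := by
    intro i hiY μ
    set σ := pauliString (LRaux.sing i μ) with hσ
    set B := timeEv H (-t) σ with hB
    have hconj : commM A σ = timeEv H t (commM W B) := by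
      rw [hA, hB]
      unfold commM
      rw [LRaux.timeEv_sub, LRaux.timeEv_mul, LRaux.timeEv_mul, LRaux.timeEv_timeEv_neg]
    have hn1 : opNorm (commM A σ) = opNorm (commM W B) := by
      rw [hconj, LRaux.opNorm_timeEv H hH]
    set L := localize B Xᶜ with hLdef
    have hcomm : W * L = L * W :=
      LRaux.disjoint_comm W L X hWs (LRaux.supported_localize B Xᶜ)
    have hsplit : commM W B = W * (B - L) - (B - L) * W := by
      have hh : W * (B - L) - (B - L) * W = W * B - B * W + (L * W - W * L) := by
        noncomm_ring
      rw [commM, hh, hcomm, sub_self, add_zero]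
    have hBL : opNorm (B - L) ≤ ∑ i' ∈ X, c₁ * E * ((d i i' : ℝ) + 1) ^ (-α) := by
      have hloc := LRaux.localize_bound B Xᶜ
          (fun i' => c₁ * E * ((d i i' : ℝ) + 1) ^ (-α)) ?_
      · rwa [compl_compl] at hloc
      · intro i' hi' ν
        exact hLR i i' σ (pauliString (LRaux.sing i' ν)) (LRaux.pauliString_unitary _)
          (by rw [hσ]; exact LRaux.supported_sing i μ) (LRaux.pauliString_unitary _)
          (LRaux.supported_sing i' ν)
    rw [hn1, hsplit]
    calc opNorm (W * (B - L) - (B - L) * W)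
        ≤ opNorm (W * (B - L)) + opNorm ((B - L) * W) := LRaux.opNorm_sub_le _ _
      _ ≤ opNorm W * opNorm (B - L) + opNorm (B - L) * opNorm W :=
          add_le_add (LRaux.opNorm_mul_le _ _) (LRaux.opNorm_mul_le _ _)
      _ ≤ 2 * opNorm (B - L) := by
          nlinarith [LRaux.opNorm_nonneg (B - L), LRaux.opNorm_nonneg W, hWn]
      _ ≤ 2 * ∑ i' ∈ X, c₁ * E * ((d i i' : ℝ) + 1) ^ (-α) := by nlinarith [hBL]
  have hmain := LRaux.localize_bound A Y
      (fun i => 2 * ∑ i' ∈ X, c₁ * E * ((d i i' : ℝ) + 1) ^ (-α)) hkey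
  refine le_trans hmain (le_of_eq ?_)
  have hexp : ∀ i : Λ, (2 : ℝ) * ∑ i' ∈ X, c₁ * E * ((d i i' : ℝ) + 1) ^ (-α)
      = ∑ i' ∈ X, 2 * c₁ * E * ((d i i' : ℝ) + 1) ^ (-α) := by
    intro i
    rw [Finset.mul_sum]
    exact Finset.sum_congr rfl fun i' _ => by ring
  calc (∑ i ∈ Yᶜ, 2 * ∑ i' ∈ X, c₁ * E * ((d i i' : ℝ) + 1) ^ (-α))
      = ∑ i ∈ Yᶜ, ∑ i' ∈ X, 2 * c₁ * E * ((d i i' : ℝ) + 1) ^ (-α) :=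
        Finset.sum_congr rfl fun i _ => hexp i
    _ = 2 * c₁ * E * ∑ i ∈ Yᶜ, ∑ i' ∈ X, ((d i i' : ℝ) + 1) ^ (-α) := by
        rw [Finset.mul_sum]
        refine Finset.sum_congr rfl fun i _ => ?_
        rw [Finset.mul_sum]
end

section
/- Integrated Lieb–Robinson differential inequality in the Frobenius norm. Let W_X be an operator supported on X ⊆ Λ, let B be any operator, and let H_X := Σ_{Z : Z∩X ≠ ∅} h_Z. Then for every t ≥ 0, ‖[W_X(t), B]‖_F ≤ ‖[W_X, B]‖_F + 2‖W_X‖ ∫₀^t ‖[H_X(s), B]‖_F ds. -/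
open scoped Classical ENNReal Matrix ComplexOrder
open Complex

section LRHelpers
set_option synthInstance.maxHeartbeats 1000000
set_option maxHeartbeats 2000000

variable {n : Type} [Fintype n] [DecidableEq n]

lemma opNorm_conjT (A : Matrix n n ℂ) : opNorm Aᴴ = opNorm A := by
  rw [opNorm, opNorm, ← Matrix.star_eq_conjTranspose, map_star]
  rw [ContinuousLinearMap.star_eq_adjoint]
  exact ContinuousLinearMap.adjoint.norm_map (Matrix.toEuclideanCLM (𝕜 := ℂ) A)

lemma trace_re_eq (A : Matrix n n ℂ) : (Aᴴ * A).trace.re = ∑ i, ∑ j, ‖A j i‖^2 := by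
  rw [Matrix.trace]
  rw [Complex.re_sum]
  congr 1; funext i
  rw [Matrix.diag_apply, Matrix.mul_apply, Complex.re_sum]
  congr 1; funext j
  rw [Matrix.conjTranspose_apply]
  simp [← Complex.normSq_eq_norm_sq, Complex.normSq_eq_conj_mul_self, Complex.normSq_apply]

/-- Unitary invariance of the normalized Frobenius norm. -/
lemma frobNorm_conj_unitary (U M : Matrix n n ℂ) (h1 : Uᴴ * U = 1) (h2 : U * Uᴴ = 1) :
    frobNorm (U * M * Uᴴ) = frobNorm M := by
  have key : (U * M * Uᴴ)ᴴ * (U * M * Uᴴ) = U * (Mᴴ * M) * Uᴴ := by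
    simp only [Matrix.conjTranspose_mul, Matrix.conjTranspose_conjTranspose, Matrix.mul_assoc]
    rw [← Matrix.mul_assoc Uᴴ U, h1, Matrix.one_mul]
  have tr : (U * (Mᴴ * M) * Uᴴ).trace = (Mᴴ * M).trace := by
    rw [Matrix.trace_mul_cycle, ← Matrix.mul_assoc, h1, Matrix.one_mul]
  rw [frobNorm, frobNorm, key, tr]

section Frob
attribute [local instance] Matrix.frobeniusNormedAddCommGroup Matrix.frobeniusNormedRing
  Matrix.frobeniusNormedSpace Matrix.frobeniusNormedAlgebra

lemma frob_norm_eq_sqrt (A : Matrix n n ℂ) : ‖A‖ = Real.sqrt (∑ i, ∑ j, ‖A i j‖^2) := by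
  rw [Matrix.frobenius_norm_def, Real.sqrt_eq_rpow]
  norm_num [Real.rpow_natCast]

lemma frobNorm_eq_norm (A : Matrix n n ℂ) :
    frobNorm A = ‖A‖ / Real.sqrt (Fintype.card n) := by
  rw [frobNorm, trace_re_eq, Real.sqrt_div (by positivity), frob_norm_eq_sqrt]
  rw [Finset.sum_comm]

lemma frob_mul_le (A M : Matrix n n ℂ) : ‖A * M‖ ≤ opNorm A * ‖M‖ := by
  have hA : 0 ≤ opNorm A := norm_nonneg _
  have key : ∀ j, ∑ i, ‖(A * M) i j‖^2 ≤ (opNorm A)^2 * ∑ i, ‖M i j‖^2 := by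
    intro j
    set u : EuclideanSpace ℂ n := (WithLp.equiv 2 _).symm (fun i => M i j) with hu
    have h1 : Matrix.toEuclideanCLM (𝕜 := ℂ) A u = (WithLp.equiv 2 _).symm (fun i => (A * M) i j) := by
      rw [hu]
      simp only [WithLp.equiv_symm_apply, Matrix.toEuclideanCLM_toLp]
      refine congrArg _ (funext fun i => ?_)
      simp [Matrix.toLin'_apply, Matrix.mulVec, Matrix.mul_apply, dotProduct]
    have h2 : ‖Matrix.toEuclideanCLM (𝕜 := ℂ) A u‖ ≤ opNorm A * ‖u‖ :=
      (Matrix.toEuclideanCLM (𝕜 := ℂ) A).le_opNorm u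
    have hnu : ‖u‖^2 = ∑ i, ‖M i j‖^2 := by
      rw [hu, EuclideanSpace.norm_eq, Real.sq_sqrt (by positivity)]
      rfl
    have hn1 : ‖Matrix.toEuclideanCLM (𝕜 := ℂ) A u‖^2 = ∑ i, ‖(A * M) i j‖^2 := by
      rw [h1, EuclideanSpace.norm_eq, Real.sq_sqrt (by positivity)]
      rfl
    calc ∑ i, ‖(A * M) i j‖^2 = ‖Matrix.toEuclideanCLM (𝕜 := ℂ) A u‖^2 := hn1.symm
      _ ≤ (opNorm A * ‖u‖)^2 := by
          apply pow_le_pow_left₀ (norm_nonneg _) h2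
      _ = (opNorm A)^2 * ‖u‖^2 := by ring
      _ = (opNorm A)^2 * ∑ i, ‖M i j‖^2 := by rw [hnu]
  rw [frob_norm_eq_sqrt, frob_norm_eq_sqrt]
  calc Real.sqrt (∑ i, ∑ j, ‖(A * M) i j‖^2)
      = Real.sqrt (∑ j, ∑ i, ‖(A * M) i j‖^2) := by rw [Finset.sum_comm]
    _ ≤ Real.sqrt ((opNorm A)^2 * ∑ j, ∑ i, ‖M i j‖^2) := by
        apply Real.sqrt_le_sqrt
        rw [Finset.mul_sum]
        exact Finset.sum_le_sum fun j _ => key j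
    _ = opNorm A * Real.sqrt (∑ j, ∑ i, ‖M i j‖^2) := by
        rw [Real.sqrt_mul (by positivity), Real.sqrt_sq hA]
    _ = opNorm A * Real.sqrt (∑ i, ∑ j, ‖M i j‖^2) := by rw [Finset.sum_comm]

lemma mul_frob_le (M A : Matrix n n ℂ) : ‖M * A‖ ≤ opNorm A * ‖M‖ := by
  calc ‖M * A‖ = ‖(M * A)ᴴ‖ := (Matrix.frobenius_norm_conjTranspose _).symm
    _ = ‖Aᴴ * Mᴴ‖ := by rw [Matrix.conjTranspose_mul]
    _ ≤ opNorm Aᴴ * ‖Mᴴ‖ := frob_mul_le _ _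
    _ = opNorm A * ‖M‖ := by rw [opNorm_conjT, Matrix.frobenius_norm_conjTranspose]

lemma frob_commM_le (A M : Matrix n n ℂ) : ‖commM A M‖ ≤ 2 * opNorm A * ‖M‖ := by
  calc ‖commM A M‖ = ‖A * M - M * A‖ := rfl
    _ ≤ ‖A * M‖ + ‖M * A‖ := norm_sub_le _ _
    _ ≤ opNorm A * ‖M‖ + opNorm A * ‖M‖ := add_le_add (frob_mul_le _ _) (mul_frob_le _ _)
    _ = 2 * opNorm A * ‖M‖ := by ring

end Frob
end LRHelpers

section SupportLemma
variable {Λ : Type} [Fintype Λ] [DecidableEq Λ]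

lemma commute_of_disjoint_support {W g : SpinOp Λ} {X Z : Finset Λ}
    (hW : IsSupportedOn W X) (hg : IsSupportedOn g Z)
    (hdisj : ∀ i ∈ Z, i ∉ X) : Commute W g := by
  show W * g = g * W
  funext a b
  show (W * g) a b = (g * W) a b
  rw [Matrix.mul_apply, Matrix.mul_apply]
  by_cases hab : ∀ i, i ∉ X → i ∉ Z → a i = b i
  · set c₁ : SpinConf Λ := fun i => if i ∈ X then b i else a i with hc₁
    set c₂ : SpinConf Λ := fun i => if i ∈ Z then b i else a i with hc₂
    have e1 : ∑ c, W a c * g c b = W a c₁ * g c₁ b := by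
      refine Finset.sum_eq_single c₁ (fun c _ hc => ?_) (by simp)
      obtain ⟨i, hi⟩ := Function.ne_iff.mp hc
      by_cases hiX : i ∈ X
      · have : c i ≠ b i := by simpa [hc₁, hiX] using hi
        have : g c b = 0 := hg.1 c b ⟨i, fun hiZ => (hdisj i hiZ hiX), this⟩
        simp [this]
      · have : c i ≠ a i := by simpa [hc₁, hiX] using hi
        have : W a c = 0 := hW.1 a c ⟨i, hiX, fun h' => this h'.symm⟩
        simp [this]
    have e2 : ∑ c, g a c * W c b = g a c₂ * W c₂ b := by
      refine Finset.sum_eq_single c₂ (fun c _ hc => ?_) (by simp)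
      obtain ⟨i, hi⟩ := Function.ne_iff.mp hc
      by_cases hiZ : i ∈ Z
      · have : c i ≠ b i := by simpa [hc₂, hiZ] using hi
        have : W c b = 0 := hW.1 c b ⟨i, hdisj i hiZ, this⟩
        simp [this]
      · have : c i ≠ a i := by simpa [hc₂, hiZ] using hi
        have : g a c = 0 := hg.1 a c ⟨i, hiZ, fun h' => this h'.symm⟩
        simp [this]
    have eW : W a c₁ = W c₂ b := by
      refine hW.2 a c₁ c₂ b (fun i hi => ?_) (fun i hi => ?_) (fun i hi => ?_) (fun i hi => ?_)
      · exact (if_neg (fun hz : i ∈ Z => hdisj i hz hi)).symm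
      · exact if_pos hi
      · exact (if_neg hi).symm
      · by_cases hiZ : i ∈ Z
        · exact if_pos hiZ
        · exact (if_neg hiZ).trans (hab i hi hiZ)
    have eg : g c₁ b = g a c₂ := by
      have := hg.2 c₁ b a c₂ (fun i hi => ?_) (fun i hi => ?_) (fun i hi => ?_) (fun i hi => ?_)
      · exact this
      · exact if_neg (hdisj i hi)
      · exact (if_pos hi).symm
      · by_cases hiX : i ∈ X
        · exact if_pos hiX
        · exact (if_neg hiX).trans (hab i hiX hi)
      · exact (if_neg hi).symm
    rw [e1, e2, eW, eg, mul_comm]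
  · push_neg at hab
    obtain ⟨i, hiX, hiZ, hne⟩ := hab
    have z1 : ∀ c : SpinConf Λ, W a c * g c b = 0 := by
      intro c
      by_cases hc : c i = a i
      · have : g c b = 0 := hg.1 c b ⟨i, hiZ, by rw [hc]; exact hne⟩
        simp [this]
      · have : W a c = 0 := hW.1 a c ⟨i, hiX, fun h' => hc h'.symm⟩
        simp [this]
    have z2 : ∀ c : SpinConf Λ, g a c * W c b = 0 := by
      intro c
      by_cases hc : c i = a i
      · have : W c b = 0 := hW.1 c b ⟨i, hiX, by rw [hc]; exact hne⟩
        simp [this]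
      · have : g a c = 0 := hg.1 a c ⟨i, hiZ, fun h' => hc h'.symm⟩
        simp [this]
    simp [z1, z2]

end SupportLemma

section MainProof
set_option synthInstance.maxHeartbeats 1000000
set_option maxHeartbeats 4000000

attribute [local instance] Matrix.frobeniusNormedAddCommGroup Matrix.frobeniusNormedRing
  Matrix.frobeniusNormedSpace Matrix.frobeniusNormedAlgebra Matrix.frobenius_normedStarGroup

variable {n : Type} [Fintype n] [DecidableEq n]

/-- `E M s = e^{isM}`. -/
noncomputable def expIH (M : Matrix n n ℂ) (s : ℝ) : Matrix n n ℂ :=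
  NormedSpace.exp ((Complex.I * (s : ℂ)) • M)

lemma expIH_eq_real (M : Matrix n n ℂ) :
    expIH M = fun u : ℝ => NormedSpace.exp (u • (Complex.I • M)) := by
  funext u
  rw [expIH]
  congr 1
  rw [← smul_assoc]
  congr 1
  simp [Complex.real_smul, mul_comm]

lemma expIH_hasDerivAt (M : Matrix n n ℂ) (s : ℝ) :
    HasDerivAt (expIH M) ((Complex.I • M) * expIH M s) s := by
  rw [expIH_eq_real]
  exact hasDerivAt_exp_smul_const' (𝕂 := ℝ) (Complex.I • M) s

lemma expIH_hasDerivAt' (M : Matrix n n ℂ) (s : ℝ) :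
    HasDerivAt (expIH M) (expIH M s * (Complex.I • M)) s := by
  rw [expIH_eq_real]
  exact hasDerivAt_exp_smul_const (𝕂 := ℝ) (Complex.I • M) s

lemma expIH_continuous (M : Matrix n n ℂ) : Continuous (expIH M) := by
  rw [expIH_eq_real]
  exact (NormedSpace.exp_continuous (𝔸 := Matrix n n ℂ)).comp (continuous_id.smul continuous_const)

lemma expIH_mul_neg (M : Matrix n n ℂ) (s : ℝ) : expIH M s * expIH (-M) s = 1 := by
  erw [expIH, expIH, ← NormedSpace.exp_add_of_commute]
  · norm_num [← NormedSpace.exp_zero (𝔸 := Matrix n n ℂ)]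
  · exact ((Commute.refl _).neg_right.smul_left _).smul_right _

lemma expIH_neg_mul (M : Matrix n n ℂ) (s : ℝ) : expIH (-M) s * expIH M s = 1 := by
  have := expIH_mul_neg (-M) s
  rwa [neg_neg] at this

lemma expIH_conjT (M : Matrix n n ℂ) (hM : Mᴴ = M) (s : ℝ) :
    (expIH M s)ᴴ = expIH (-M) s := by
  rw [expIH, expIH, ← Matrix.star_eq_conjTranspose, NormedSpace.star_exp]
  congr 1
  rw [star_smul, Matrix.star_eq_conjTranspose, hM,
    show star (Complex.I * (s : ℂ)) = -(Complex.I * (s : ℂ)) by simp]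
  module

lemma expIH_zero (M : Matrix n n ℂ) : expIH M 0 = 1 := by
  rw [expIH]
  norm_num [← NormedSpace.exp_zero (𝔸 := Matrix n n ℂ)]

lemma commM_smul (A : Matrix n n ℂ) (c : ℂ) (M : Matrix n n ℂ) :
    commM A (c • M) = c • commM A M := by
  rw [commM, commM, mul_smul_comm, smul_mul_assoc, smul_sub]

lemma frobNorm_smul (c : ℂ) (A : Matrix n n ℂ) : frobNorm (c • A) = ‖c‖ * frobNorm A := by
  rw [frobNorm_eq_norm, frobNorm_eq_norm, norm_smul]
  ring

lemma frobNorm_add_le (A B : Matrix n n ℂ) : frobNorm (A + B) ≤ frobNorm A + frobNorm B := by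
  simp only [frobNorm_eq_norm, div_eq_mul_inv, ← add_mul]
  exact mul_le_mul_of_nonneg_right (norm_add_le _ _) (by positivity)

lemma frobNorm_commM_le (A M : Matrix n n ℂ) :
    frobNorm (commM A M) ≤ 2 * opNorm A * frobNorm M := by
  simp only [frobNorm_eq_norm, div_eq_mul_inv]
  rw [← mul_assoc]
  exact mul_le_mul_of_nonneg_right (frob_commM_le A M) (by positivity)

end MainProof

section AuxMain
set_option synthInstance.maxHeartbeats 1000000
set_option maxHeartbeats 4000000

attribute [local instance] Matrix.frobeniusNormedAddCommGroup Matrix.frobeniusNormedRing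
  Matrix.frobeniusNormedSpace Matrix.frobeniusNormedAlgebra Matrix.frobenius_normedStarGroup

theorem aux_LR
    {Λ : Type} [Fintype Λ] [DecidableEq Λ]
    (h : Finset Λ → SpinOp Λ)
    (hsupp : ∀ Z, IsSupportedOn (h Z) Z)
    (hherm : ∀ Z, (h Z).IsHermitian)
    (X : Finset Λ) (W : SpinOp Λ) (hW : IsSupportedOn W X)
    (B : SpinOp Λ) (t : ℝ) (ht : 0 ≤ t) :
    frobNorm (commM (timeEv (∑ Z : Finset Λ, h Z) t W) B)
      ≤ frobNorm (commM W B) +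
        2 * opNorm W *
          ∫ s in (0 : ℝ)..t,
            frobNorm (commM
              (timeEv (∑ Z : Finset Λ, h Z) s
                (∑ Z ∈ Finset.univ.filter (fun Z : Finset Λ => (Z ∩ X).Nonempty), h Z))
              B) := by
  set H : SpinOp Λ := ∑ Z : Finset Λ, h Z with hH
  set Hx : SpinOp Λ := ∑ Z ∈ Finset.univ.filter (fun Z : Finset Λ => (Z ∩ X).Nonempty), h Z
    with hHxdef
  set Hc : SpinOp Λ := ∑ Z ∈ Finset.univ.filter (fun Z : Finset Λ => ¬(Z ∩ X).Nonempty), h Z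
    with hHcdef
  have hsplit : Hx + Hc = H := Finset.sum_filter_add_sum_filter_not _ _ _
  have hHxval : Hx = H - Hc := eq_sub_of_add_eq hsplit
  have hHherm : Hᴴ = H := by
    rw [hH, Matrix.conjTranspose_sum]
    exact Finset.sum_congr rfl fun Z _ => hherm Z
  have hHcherm : Hcᴴ = Hc := by
    rw [hHcdef, Matrix.conjTranspose_sum]
    exact Finset.sum_congr rfl fun Z _ => hherm Z
  have hWHc : Commute W Hc := by
    apply Commute.sum_right
    intro Z hZ
    rw [Finset.mem_filter] at hZ
    exact commute_of_disjoint_support hW (hsupp Z)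
      (fun i hi hiX => hZ.2 ⟨i, Finset.mem_inter.mpr ⟨hi, hiX⟩⟩)
  -- collapsing lemmas
  have cEmEp : ∀ (s : ℝ) (x : SpinOp Λ), expIH (-H) s * (expIH H s * x) = x := fun s x => by
    rw [← mul_assoc, expIH_neg_mul, one_mul]
  have cEpEm : ∀ (s : ℝ) (x : SpinOp Λ), expIH H s * (expIH (-H) s * x) = x := fun s x => by
    rw [← mul_assoc, expIH_mul_neg, one_mul]
  have cFmFp : ∀ (s : ℝ) (x : SpinOp Λ), expIH (-Hc) s * (expIH Hc s * x) = x := fun s x => by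
    rw [← mul_assoc, expIH_neg_mul, one_mul]
  have cFpFm : ∀ (s : ℝ) (x : SpinOp Λ), expIH Hc s * (expIH (-Hc) s * x) = x := fun s x => by
    rw [← mul_assoc, expIH_mul_neg, one_mul]
  have hWFm : ∀ s : ℝ, Commute W (expIH (-Hc) s) :=
    fun s => Commute.exp_right ((hWHc.neg_right).smul_right (Complex.I * (s : ℂ)))
  have hWFp : ∀ s : ℝ, Commute W (expIH Hc s) :=
    fun s => Commute.exp_right (hWHc.smul_right (Complex.I * (s : ℂ)))
  have hHcFm : ∀ s : ℝ, Hc * expIH (-Hc) s = expIH (-Hc) s * Hc :=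
    fun s => (Commute.exp_right (((Commute.refl Hc).neg_right).smul_right
      (Complex.I * (s : ℂ)))).eq
  have htime : ∀ (s : ℝ) (M : SpinOp Λ), timeEv H s M = expIH H s * M * expIH (-H) s := by
    intro s M
    have h0 : timeEv H s M = NormedSpace.exp ((Complex.I * (s : ℂ)) • H) * M *
        NormedSpace.exp ((-(Complex.I * (s : ℂ))) • H) := rfl
    rw [h0, expIH, expIH]
    congr 2
    module
  -- the unitary conjugation identities
  have hVconj : ∀ s : ℝ, (expIH H s * expIH (-Hc) s)ᴴ = expIH Hc s * expIH (-H) s := by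
    intro s
    rw [Matrix.conjTranspose_mul, expIH_conjT H hHherm,
      expIH_conjT (-Hc) (by rw [Matrix.conjTranspose_neg, hHcherm]), neg_neg]
  have hVVd : ∀ s : ℝ, (expIH H s * expIH (-Hc) s) * (expIH Hc s * expIH (-H) s) = 1 := by
    intro s
    rw [mul_assoc, cFmFp, expIH_mul_neg]
  have hVdV : ∀ s : ℝ, (expIH Hc s * expIH (-H) s) * (expIH H s * expIH (-Hc) s) = 1 := by
    intro s
    rw [mul_assoc, cEmEp, expIH_mul_neg]
  have swap : ∀ {a b : SpinOp Λ}, a * b = b * a → ∀ x : SpinOp Λ,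
      a * (b * x) = b * (a * x) := fun hab x => by rw [← mul_assoc, hab, mul_assoc]
  have bEpEm : ∀ s : ℝ, expIH H s * expIH (-H) s = 1 := expIH_mul_neg H
  have bEmEp : ∀ s : ℝ, expIH (-H) s * expIH H s = 1 := expIH_neg_mul H
  have bFpFm : ∀ s : ℝ, expIH Hc s * expIH (-Hc) s = 1 := expIH_mul_neg Hc
  have bFmFp : ∀ s : ℝ, expIH (-Hc) s * expIH Hc s = 1 := expIH_neg_mul Hc
  have hconjW : ∀ s : ℝ, timeEv H s W =
      (expIH H s * expIH (-Hc) s) * W * (expIH Hc s * expIH (-H) s) := by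
    intro s
    rw [htime]
    simp only [mul_assoc]
    rw [swap ((hWFm s).eq.symm), cFmFp]
  set T : ℝ → SpinOp Λ := fun s =>
    (expIH Hc s * expIH (-H) s) * B * (expIH H s * expIH (-Hc) s) with hTdef
  have hTderiv : ∀ s : ℝ, HasDerivAt T
      ((-Complex.I) • ((expIH Hc s * expIH (-H) s) *
        (commM (expIH H s * Hx * expIH (-H) s) B * (expIH H s * expIH (-Hc) s)))) s := by
    intro s
    have hFp := expIH_hasDerivAt' Hc s
    have hEm := expIH_hasDerivAt (-H) s
    have hEp := expIH_hasDerivAt' H s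
    have hFm := expIH_hasDerivAt' (-Hc) s
    have hBig := ((hFp.mul hEm).mul_const B).mul (hEp.mul hFm)
    convert hBig using 1
    case e'_4 => rfl
    case e'_5 => rfl
    case e'_6 => rfl
    case e'_8 => rfl
    rw [hHxval]
    simp only [commM, Matrix.mul_sub, Matrix.sub_mul, mul_sub, sub_mul, mul_add, add_mul,
      smul_sub, smul_add, smul_neg, neg_smul, mul_neg, neg_mul, neg_neg,
      mul_smul_comm, smul_mul_assoc, mul_assoc,
      cEmEp, cEpEm, cFmFp, cFpFm, bEpEm, bEmEp, bFpFm, bFmFp, mul_one, hHcFm s, Pi.mul_apply]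
    module
  set G : ℝ → SpinOp Λ := fun s => commM W (T s) with hGdef
  set D : ℝ → SpinOp Λ := fun s => (-Complex.I) • commM W
      ((expIH Hc s * expIH (-H) s) *
        (commM (expIH H s * Hx * expIH (-H) s) B * (expIH H s * expIH (-Hc) s))) with hDdef
  have hGderiv : ∀ s : ℝ, HasDerivAt G (D s) s := by
    intro s
    have h2 := ((hTderiv s).const_mul W).sub ((hTderiv s).mul_const W)
    convert h2 using 1
    case e'_4 => rfl
    case e'_5 => rfl
    case e'_6 => rfl
    case e'_8 => rfl
    simp only [hDdef]
    rw [← commM_smul]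
    rfl
  have hcont : Continuous D := by
    rw [hDdef]
    apply Continuous.const_smul (M := ℂ) (α := SpinOp Λ)
    have e1 := expIH_continuous H
    have e2 := expIH_continuous (-H)
    have e3 := expIH_continuous Hc
    have e4 := expIH_continuous (-Hc)
    have inner : Continuous (fun s : ℝ => expIH H s * Hx * expIH (-H) s) :=
      (e1.mul continuous_const).mul e2
    simp only [commM]
    exact (continuous_const.mul ((e3.mul e2).mul
        (((inner.mul continuous_const).sub (continuous_const.mul inner)).mul (e1.mul e4)))).sub
      (((e3.mul e2).mul
        (((inner.mul continuous_const).sub (continuous_const.mul inner)).mul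
          (e1.mul e4))).mul continuous_const)
  have hG0 : G 0 = commM W B := by
    rw [hGdef]
    show commM W (T 0) = commM W B
    rw [hTdef]
    simp [expIH_zero]
  have hFTC : (∫ s in (0:ℝ)..t, D s) = G t - G 0 :=
    intervalIntegral.integral_eq_sub_of_hasDerivAt (fun s _ => hGderiv s)
      (hcont.intervalIntegrable 0 t)
  have hstep2 : G t = commM W B + ∫ s in (0:ℝ)..t, D s := by
    rw [hFTC, hG0, add_sub_cancel]
  have hVdconj : ∀ s : ℝ, (expIH Hc s * expIH (-H) s)ᴴ = expIH H s * expIH (-Hc) s :=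
    fun s => by rw [← hVconj s, Matrix.conjTranspose_conjTranspose]
  have hstep1 : frobNorm (commM (timeEv H t W) B) = frobNorm (G t) := by
    have halg : commM ((expIH H t * expIH (-Hc) t) * W * (expIH Hc t * expIH (-H) t)) B
        = (expIH H t * expIH (-Hc) t) * commM W (T t) * (expIH Hc t * expIH (-H) t) := by
      rw [hTdef]
      simp only [commM, Matrix.mul_sub, Matrix.sub_mul, mul_sub, sub_mul, mul_assoc,
        cEmEp, cEpEm, cFmFp, cFpFm, bEpEm, bEmEp, bFpFm, bFmFp, mul_one]
    rw [hconjW t, halg, ← hVconj t]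
    have h1 : (expIH H t * expIH (-Hc) t)ᴴ * (expIH H t * expIH (-Hc) t) = 1 := by
      rw [hVconj t]; exact hVdV t
    have h2 : (expIH H t * expIH (-Hc) t) * (expIH H t * expIH (-Hc) t)ᴴ = 1 := by
      rw [hVconj t]; exact hVVd t
    exact frobNorm_conj_unitary _ _ h1 h2
  have hpt : ∀ s : ℝ, frobNorm (D s)
      ≤ 2 * opNorm W * frobNorm (commM (timeEv H s Hx) B) := by
    intro s
    have hconjC : frobNorm ((expIH Hc s * expIH (-H) s) *
        (commM (expIH H s * Hx * expIH (-H) s) B * (expIH H s * expIH (-Hc) s)))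
        = frobNorm (commM (timeEv H s Hx) B) := by
      have e : (expIH Hc s * expIH (-H) s) *
          (commM (expIH H s * Hx * expIH (-H) s) B * (expIH H s * expIH (-Hc) s))
          = (expIH Hc s * expIH (-H) s) * commM (expIH H s * Hx * expIH (-H) s) B *
            (expIH Hc s * expIH (-H) s)ᴴ := by
        simp only [hVdconj s, mul_assoc]
      rw [e]
      have h1 : (expIH Hc s * expIH (-H) s)ᴴ * (expIH Hc s * expIH (-H) s) = 1 := by
        rw [hVdconj s]; exact hVVd s
      have h2 : (expIH Hc s * expIH (-H) s) * (expIH Hc s * expIH (-H) s)ᴴ = 1 := by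
        rw [hVdconj s]; exact hVdV s
      rw [frobNorm_conj_unitary _ _ h1 h2, htime]
    calc frobNorm (D s)
        = frobNorm (commM W ((expIH Hc s * expIH (-H) s) *
            (commM (expIH H s * Hx * expIH (-H) s) B * (expIH H s * expIH (-Hc) s)))) := by
          rw [hDdef, frobNorm_smul]
          simp
      _ ≤ 2 * opNorm W * frobNorm ((expIH Hc s * expIH (-H) s) *
            (commM (expIH H s * Hx * expIH (-H) s) B * (expIH H s * expIH (-Hc) s))) :=
          frobNorm_commM_le _ _
      _ = 2 * opNorm W * frobNorm (commM (timeEv H s Hx) B) := by rw [hconjC]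
  have hcont2 : Continuous (fun s : ℝ => 2 * opNorm W * frobNorm (commM (timeEv H s Hx) B)) := by
    have e1 := expIH_continuous H
    have e2 := expIH_continuous (-H)
    have inner : Continuous (fun s : ℝ => expIH H s * Hx * expIH (-H) s) :=
      (e1.mul continuous_const).mul e2
    have hfun : (fun s : ℝ => 2 * opNorm W * frobNorm (commM (timeEv H s Hx) B))
        = fun s : ℝ => 2 * opNorm W *
            (‖(expIH H s * Hx * expIH (-H) s) * B - B * (expIH H s * Hx * expIH (-H) s)‖ /
              Real.sqrt (Fintype.card (SpinConf Λ))) := by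
      funext s
      rw [htime, frobNorm_eq_norm]
      rfl
    rw [hfun]
    exact continuous_const.mul
      (((inner.mul continuous_const).sub (continuous_const.mul inner)).norm.div_const _)
  have hbound : frobNorm (∫ s in (0:ℝ)..t, D s)
      ≤ 2 * opNorm W * ∫ s in (0:ℝ)..t, frobNorm (commM (timeEv H s Hx) B) := by
    rw [frobNorm_eq_norm]
    have hN : (0:ℝ) ≤ Real.sqrt (Fintype.card (SpinConf Λ)) := Real.sqrt_nonneg _
    calc ‖∫ s in (0:ℝ)..t, D s‖ / Real.sqrt (Fintype.card (SpinConf Λ))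
        ≤ (∫ s in (0:ℝ)..t, ‖D s‖) / Real.sqrt (Fintype.card (SpinConf Λ)) := by
          gcongr
          exact intervalIntegral.norm_integral_le_integral_norm ht
      _ = ∫ s in (0:ℝ)..t, ‖D s‖ / Real.sqrt (Fintype.card (SpinConf Λ)) := by
          rw [intervalIntegral.integral_div]
      _ ≤ ∫ s in (0:ℝ)..t, 2 * opNorm W * frobNorm (commM (timeEv H s Hx) B) := by
          apply intervalIntegral.integral_mono_on ht
            ((hcont.norm.div_const _).intervalIntegrable 0 t)
            (hcont2.intervalIntegrable 0 t)
          intro s _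
          rw [← frobNorm_eq_norm]
          exact hpt s
      _ = 2 * opNorm W * ∫ s in (0:ℝ)..t, frobNorm (commM (timeEv H s Hx) B) :=
          intervalIntegral.integral_const_mul _ _
  calc frobNorm (commM (timeEv H t W) B)
      = frobNorm (G t) := hstep1
    _ = frobNorm (commM W B + ∫ s in (0:ℝ)..t, D s) := by rw [hstep2]
    _ ≤ frobNorm (commM W B) + frobNorm (∫ s in (0:ℝ)..t, D s) := frobNorm_add_le _ _
    _ ≤ frobNorm (commM W B) +
        2 * opNorm W * ∫ s in (0:ℝ)..t, frobNorm (commM (timeEv H s Hx) B) :=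
        add_le_add_right hbound _

end AuxMain

/-- **Integrated Lieb–Robinson differential inequality in the Frobenius norm:**
`‖[W_X(t),B]‖_F ≤ ‖[W_X,B]‖_F + 2‖W_X‖ ∫₀^t ‖[H_X(s),B]‖_F ds`. -/
theorem integrated_LR_differential_inequality
    {Λ : Type} [Fintype Λ] [DecidableEq Λ]
    (h : Finset Λ → SpinOp Λ)
    (hsupp : ∀ Z, IsSupportedOn (h Z) Z)
    (hherm : ∀ Z, (h Z).IsHermitian)
    (X : Finset Λ) (W : SpinOp Λ) (hW : IsSupportedOn W X)
    (B : SpinOp Λ) (t : ℝ) (ht : 0 ≤ t) :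
    frobNorm (commM (timeEv (∑ Z : Finset Λ, h Z) t W) B)
      ≤ frobNorm (commM W B) +
        2 * opNorm W *
          ∫ s in (0 : ℝ)..t,
            frobNorm (commM
              (timeEv (∑ Z : Finset Λ, h Z) s
                (∑ Z ∈ Finset.univ.filter (fun Z : Finset Λ => (Z ∩ X).Nonempty), h Z))
              B) := by
  exact aux_LR h hsupp hherm X W hW B t ht
end

section
/- Site-by-site bound on the partial-trace localization error. Let A be any operator on ⨂_{i∈Λ} ℂ² and X̃ ⊆ Λ. Then for every p ∈ [1,∞], ‖A − (tr_{X̃^c}[A] / tr_{X̃^c}(1̂)) ⊗ 1_{X̃^c}‖_p ≤ Σ_{i∈X̃^c} sup_{U_i} ‖[A, U_i]‖_p, where the supremum runs over all unitaries U_i supported on the single site {i}. -/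
open scoped Classical ENNReal Matrix ComplexOrder
open Complex

set_option synthInstance.maxHeartbeats 1000000
set_option maxHeartbeats 2000000

noncomputable section

namespace LocE


open Matrix

variable {n : Type} [Fintype n] [DecidableEq n]

lemma unit_one : IsUnitaryM (1 : Matrix n n ℂ) := by
  constructor <;> simp

lemma unit_ct {U : Matrix n n ℂ} (hU : IsUnitaryM U) : IsUnitaryM Uᴴ := by
  refine ⟨?_, ?_⟩ <;> rw [conjTranspose_conjTranspose]
  · exact hU.2
  · exact hU.1

lemma unit_mul {U V : Matrix n n ℂ} (hU : IsUnitaryM U) (hV : IsUnitaryM V) :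
    IsUnitaryM (U * V) := by
  constructor
  · rw [conjTranspose_mul, mul_assoc, ← mul_assoc Uᴴ, hU.1, one_mul, hV.1]
  · rw [conjTranspose_mul, mul_assoc, ← mul_assoc V, hV.2, one_mul, hU.2]

/-- Singular values. -/
noncomputable def svs (M : Matrix n n ℂ) : n → ℝ := fun i =>
  Real.sqrt ((Matrix.posSemidef_conjTranspose_mul_self M).1.eigenvalues i)

lemma svs_nonneg (M : Matrix n n ℂ) (i : n) : 0 ≤ svs M i := Real.sqrt_nonneg _

lemma svs_mul_self (M : Matrix n n ℂ) (i : n) :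
    svs M i * svs M i = (Matrix.posSemidef_conjTranspose_mul_self M).1.eigenvalues i :=
  Real.mul_self_sqrt ((Matrix.posSemidef_conjTranspose_mul_self M).eigenvalues_nonneg i)

/-- Matrix with prescribed columns. -/
def colM (b : n → EuclideanSpace ℂ n) : Matrix n n ℂ := Matrix.of fun x j => b j x

lemma colM_unitary {b : n → EuclideanSpace ℂ n} (hb : Orthonormal ℂ b) :
    IsUnitaryM (colM b) := by
  have h1 : (colM b)ᴴ * colM b = 1 := by
    ext i j
    have := (orthonormal_iff_ite (𝕜 := ℂ)).mp hb i j
    rw [EuclideanSpace.inner_eq_star_dotProduct, dotProduct_comm] at this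
    simpa [Matrix.mul_apply, Matrix.conjTranspose_apply, colM, dotProduct,
      Matrix.one_apply] using this
  exact ⟨h1, (mul_eq_one_comm).mp h1⟩

theorem exists_svd (M : Matrix n n ℂ) : ∃ U V : Matrix n n ℂ, IsUnitaryM U ∧ IsUnitaryM V ∧
    M = U * Matrix.diagonal (fun i => (svs M i : ℂ)) * Vᴴ := by
  set hH := (Matrix.posSemidef_conjTranspose_mul_self M).1 with hHdef
  set v : n → EuclideanSpace ℂ n := fun j => hH.eigenvectorBasis j with hv
  have orth : ∀ i j, dotProduct (star (v i : n → ℂ)) (v j : n → ℂ)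
      = if i = j then 1 else 0 := by
    intro i j
    have := (orthonormal_iff_ite (𝕜 := ℂ)).mp hH.eigenvectorBasis.orthonormal i j
    rwa [EuclideanSpace.inner_eq_star_dotProduct, dotProduct_comm] at this
  have key : ∀ i j : n, dotProduct (star (M *ᵥ (v i : n → ℂ))) (M *ᵥ (v j : n → ℂ))
      = (hH.eigenvalues j : ℂ) * (if i = j then 1 else 0) := by
    intro i j
    have hmv : (Mᴴ * M) *ᵥ (v j : n → ℂ) = hH.eigenvalues j • (v j : n → ℂ) :=
      hH.mulVec_eigenvectorBasis j
    rw [Matrix.star_mulVec, ← dotProduct_mulVec, Matrix.mulVec_mulVec, hmv,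
      dotProduct_smul, orth i j]
    simp [Complex.real_smul]
  -- the orthonormal partial family
  set s : Set n := {j | svs M j ≠ 0} with hs
  set w : n → EuclideanSpace ℂ n := fun j =>
    ((svs M j : ℂ))⁻¹ • (WithLp.equiv 2 (n → ℂ)).symm (M *ᵥ (v j : n → ℂ)) with hw
  have hwo : Orthonormal ℂ (s.restrict w) := by
    rw [orthonormal_iff_ite]
    intro i j
    have hii : (svs M (i : n) : ℂ) ≠ 0 := by
      exact_mod_cast fun h => i.2 (by exact_mod_cast h)
    have hjj : (svs M (j : n) : ℂ) ≠ 0 := by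
      exact_mod_cast fun h => j.2 (by exact_mod_cast h)
    simp only [Set.restrict_apply, Set.restrict, hw, inner_smul_left, inner_smul_right]
    rw [show ∀ x y : n → ℂ, inner ℂ ((WithLp.equiv 2 (n → ℂ)).symm x) ((WithLp.equiv 2 (n → ℂ)).symm y)
        = dotProduct (star x) y from fun x y => dotProduct_comm _ _, key]
    rcases eq_or_ne i j with h | h
    · subst h
      have hsv : (hH.eigenvalues (i : n) : ℂ) = (svs M i : ℂ) * (svs M i : ℂ) := by
        rw [← svs_mul_self M i]; push_cast; ring
      simp only [if_pos rfl, if_true, Subtype.coe_eta, mul_one, hsv]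
      rw [map_inv₀, Complex.conj_ofReal]
      field_simp
    · have hne : (i : n) ≠ (j : n) := fun hc => h (Subtype.ext hc)
      simp [hne, h]
  obtain ⟨b, hb⟩ := hwo.exists_orthonormalBasis_extension_of_card_eq
    (finrank_euclideanSpace (𝕜 := ℂ) (ι := n))
  refine ⟨colM b, colM v, colM_unitary b.orthonormal, colM_unitary hH.eigenvectorBasis.orthonormal,
    ?_⟩
  have hVu : IsUnitaryM (colM v) := colM_unitary hH.eigenvectorBasis.orthonormal
  have main : M * colM v = colM b * Matrix.diagonal (fun i => (svs M i : ℂ)) := by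
    ext x j
    have lhs : (M * colM v) x j = (M *ᵥ (v j : n → ℂ)) x := by
      simp [Matrix.mul_apply, Matrix.mulVec, dotProduct, colM]
    rw [lhs, Matrix.mul_diagonal]
    rcases eq_or_ne (svs M j) 0 with hz | hz
    · have hlam : hH.eigenvalues j = 0 := by
        have := svs_mul_self M j
        rw [hz] at this; simpa using this.symm
      have : dotProduct (star (M *ᵥ (v j : n → ℂ))) (M *ᵥ (v j : n → ℂ)) = 0 := by
        rw [key j j, hlam]; simp
      have hzero : (M *ᵥ (v j : n → ℂ)) = 0 := by
        funext y
        have hsum := this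
        rw [dotProduct] at hsum
        simp only [Pi.star_apply] at hsum
        have hterm : ∀ y : n, star ((M *ᵥ (v j : n → ℂ)) y) * (M *ᵥ (v j : n → ℂ)) y
            = (Complex.normSq ((M *ᵥ (v j : n → ℂ)) y) : ℂ) := by
          intro y; rw [Complex.star_def, mul_comm, Complex.mul_conj]
        rw [Finset.sum_congr rfl (fun y _ => hterm y)] at hsum
        have : ∑ y, Complex.normSq ((M *ᵥ (v j : n → ℂ)) y) = 0 := by
          exact_mod_cast hsum
        have hy := (Finset.sum_eq_zero_iff_of_nonneg
          (fun y _ => Complex.normSq_nonneg _)).mp this y (Finset.mem_univ y)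
        simpa using (Complex.normSq_eq_zero.mp hy)
      rw [hzero, hz]
      simp
    · have hj : j ∈ s := hz
      have hbw : b j = w j := hb j hj
      have hcz : (svs M j : ℂ) ≠ 0 := by exact_mod_cast hz
      simp only [colM, Matrix.of_apply, hbw, hw, PiLp.smul_apply, smul_eq_mul]
      have heq : ((WithLp.equiv 2 (n → ℂ)).symm (M *ᵥ (v j : n → ℂ))) x
          = (M *ᵥ (v j : n → ℂ)) x := rfl
      rw [heq]
      field_simp
  calc M = M * (colM v * (colM v)ᴴ) := by rw [hVu.2, mul_one]
    _ = (M * colM v) * (colM v)ᴴ := by rw [mul_assoc]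
    _ = colM b * Matrix.diagonal (fun i => (svs M i : ℂ)) * (colM v)ᴴ := by rw [main]

/-- The dual class of matrices for the Schatten `pr`-norm. -/
def InDual (pr : ℝ) (N : Matrix n n ℂ) : Prop :=
  ∃ U V : Matrix n n ℂ, ∃ e : n → ℝ, IsUnitaryM U ∧ IsUnitaryM V ∧ (∀ j, 0 ≤ e j) ∧
    ((1 < pr → ∑ j, e j ^ (pr / (pr - 1)) ≤ 1) ∧ (pr = 1 → ∀ j, e j ≤ 1)) ∧
    N = U * Matrix.diagonal (fun j => (e j : ℂ)) * Vᴴ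

lemma InDual_conj {pr : ℝ} {N W₁ W₂ : Matrix n n ℂ} (hN : InDual pr N)
    (h1 : IsUnitaryM W₁) (h2 : IsUnitaryM W₂) : InDual pr (W₁ * N * W₂) := by
  obtain ⟨U, V, e, hU, hV, he0, hec, rfl⟩ := hN
  refine ⟨W₁ * U, W₂ᴴ * V, e, unit_mul h1 hU, unit_mul (unit_ct h2) hV, he0, hec, ?_⟩
  rw [conjTranspose_mul, conjTranspose_conjTranspose]
  simp only [mul_assoc]

lemma trace_dgeh (d e : n → ℝ) (G H : Matrix n n ℂ) :
    (Matrix.diagonal (fun i => (d i : ℂ)) * G * Matrix.diagonal (fun j => (e j : ℂ)) * H).trace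
      = ∑ i, ∑ j, (d i : ℂ) * G i j * (e j : ℂ) * H j i := by
  have h1 : Matrix.diagonal (fun i => (d i : ℂ)) * G * Matrix.diagonal (fun j => (e j : ℂ))
      = Matrix.of fun i j => (d i : ℂ) * G i j * (e j : ℂ) := by
    ext i j
    rw [Matrix.mul_diagonal, Matrix.diagonal_mul, Matrix.of_apply]
  rw [h1, Matrix.trace]
  simp only [Matrix.diag_apply, Matrix.mul_apply, Matrix.of_apply]

lemma unitary_row_sq {G : Matrix n n ℂ} (hG : IsUnitaryM G) (i : n) :
    ∑ j, ‖G i j‖ ^ (2 : ℕ) = 1 := by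
  have h := congrArg (fun X : Matrix n n ℂ => X i i) hG.2
  simp only [Matrix.mul_apply, Matrix.conjTranspose_apply, Matrix.one_apply_eq] at h
  have h2 : ((∑ j, Complex.normSq (G i j) : ℝ) : ℂ) = ((1 : ℝ) : ℂ) := by
    push_cast
    rw [← h]
    exact Finset.sum_congr rfl fun j _ => by
      rw [← Complex.mul_conj]; rfl
  have h3 : (∑ j, Complex.normSq (G i j) : ℝ) = 1 := by exact_mod_cast h2
  rw [← h3]
  exact Finset.sum_congr rfl fun j _ => Complex.sq_norm _

lemma unitary_col_sq {G : Matrix n n ℂ} (hG : IsUnitaryM G) (j : n) :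
    ∑ i, ‖G i j‖ ^ (2 : ℕ) = 1 := by
  have := unitary_row_sq (unit_ct hG) j
  simpa [Matrix.conjTranspose_apply] using this

/-- Hölder/von Neumann-type bound for traces against dual-class matrices. -/
theorem trace_le_snF {pr : ℝ} (hpr : 1 ≤ pr) (M N : Matrix n n ℂ) (hN : InDual pr N) :
    ‖(M * N).trace‖ ≤ (∑ i, svs M i ^ pr) ^ (1 / pr) := by
  have hpr0 : pr ≠ 0 := by positivity
  obtain ⟨U₂, V₂, e, hU₂, hV₂, he0, hecon, rfl⟩ := hN
  obtain ⟨U₁, V₁, hU₁, hV₁, hM⟩ := exists_svd M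
  set d := svs M with hd
  have hd0 : ∀ i, 0 ≤ d i := svs_nonneg M
  set G := V₁ᴴ * U₂ with hG
  set H := V₂ᴴ * U₁ with hH
  have hGu : IsUnitaryM G := unit_mul (unit_ct hV₁) hU₂
  have hHu : IsUnitaryM H := unit_mul (unit_ct hV₂) hU₁
  have htr : (M * (U₂ * Matrix.diagonal (fun j => (e j : ℂ)) * V₂ᴴ)).trace
      = ∑ i, ∑ j, (d i : ℂ) * G i j * (e j : ℂ) * H j i := by
    conv_lhs => rw [hM]
    have hre : (U₁ * Matrix.diagonal (fun i => (d i : ℂ)) * V₁ᴴ) *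
        (U₂ * Matrix.diagonal (fun j => (e j : ℂ)) * V₂ᴴ)
        = U₁ * (Matrix.diagonal (fun i => (d i : ℂ)) * G * Matrix.diagonal (fun j => (e j : ℂ))
            * V₂ᴴ) := by
      rw [hG]; simp only [mul_assoc]
    rw [hre, Matrix.trace_mul_comm, ← trace_dgeh d e G H]
    congr 1
    rw [hH]; simp only [mul_assoc]
  set m : n → n → ℝ := fun i j => ‖G i j‖ * ‖H j i‖ with hm
  have hm0 : ∀ i j, 0 ≤ m i j := fun i j =>
    mul_nonneg (norm_nonneg _) (norm_nonneg _)
  have habs : ‖(M * (U₂ * Matrix.diagonal (fun j => (e j : ℂ)) * V₂ᴴ)).trace‖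
      ≤ ∑ i, ∑ j, d i * e j * m i j := by
    rw [htr]
    refine (norm_sum_le _ _).trans ?_
    refine Finset.sum_le_sum fun i _ => ?_
    refine (norm_sum_le _ _).trans ?_
    refine Finset.sum_le_sum fun j _ => ?_
    rw [norm_mul, norm_mul, norm_mul, Complex.norm_of_nonneg (hd0 i),
      Complex.norm_of_nonneg (he0 j)]
    rw [hm]; ring_nf; exact le_refl _
  refine habs.trans ?_
  have hrow : ∀ i, ∑ j, m i j ≤ 1 := by
    intro i
    have hcs := Finset.sum_mul_sq_le_sq_mul_sq Finset.univ (fun j => ‖G i j‖)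
      (fun j => ‖H j i‖)
    rw [unitary_row_sq hGu i, unitary_col_sq hHu i] at hcs
    have h1 : (∑ j, m i j) ^ (2 : ℕ) ≤ 1 := by simpa [hm] using hcs
    nlinarith [Finset.sum_nonneg fun j (_ : j ∈ Finset.univ) => hm0 i j]
  have hcol : ∀ j, ∑ i, m i j ≤ 1 := by
    intro j
    have hcs := Finset.sum_mul_sq_le_sq_mul_sq Finset.univ (fun i => ‖G i j‖)
      (fun i => ‖H j i‖)
    rw [unitary_col_sq hGu j, unitary_row_sq hHu j] at hcs
    have h1 : (∑ i, m i j) ^ (2 : ℕ) ≤ 1 := by simpa [hm] using hcs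
    nlinarith [Finset.sum_nonneg fun i (_ : i ∈ Finset.univ) => hm0 i j]
  rcases lt_or_eq_of_le hpr with hpr1 | hpr1
  · -- 1 < pr : Hölder
    set q := pr / (pr - 1) with hq
    have hpq : pr.HolderConjugate q := Real.HolderConjugate.conjExponent hpr1
    have hq0 : q ≠ 0 := ne_of_gt hpq.symm.pos
    have hinv : 1 / pr + 1 / q = 1 := by
      have := hpq.inv_add_inv_eq_one
      simpa [one_div] using this
    have he2 : ∑ j, e j ^ q ≤ 1 := hecon.1 hpr1
    have hprpos : (0:ℝ) < pr := lt_of_lt_of_le one_pos hpr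
    have hqpos : (0:ℝ) < q := hpq.symm.pos
    have hhold := Real.inner_le_Lp_mul_Lq_of_nonneg (s := (Finset.univ : Finset (n × n)))
      (f := fun ij => d ij.1 * m ij.1 ij.2 ^ (1 / pr))
      (g := fun ij => e ij.2 * m ij.1 ij.2 ^ (1 / q)) hpq
      (fun ij _ => mul_nonneg (hd0 _) (Real.rpow_nonneg (hm0 _ _) _))
      (fun ij _ => mul_nonneg (he0 _) (Real.rpow_nonneg (hm0 _ _) _))
    have hfg : ∀ ij : n × n, (d ij.1 * m ij.1 ij.2 ^ (1 / pr)) * (e ij.2 * m ij.1 ij.2 ^ (1 / q))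
        = d ij.1 * e ij.2 * m ij.1 ij.2 := by
      intro ij
      have hmm : m ij.1 ij.2 ^ (1 / pr) * m ij.1 ij.2 ^ (1 / q) = m ij.1 ij.2 := by
        rw [← Real.rpow_add' (hm0 _ _) (by rw [hinv]; norm_num), hinv, Real.rpow_one]
      calc (d ij.1 * m ij.1 ij.2 ^ (1 / pr)) * (e ij.2 * m ij.1 ij.2 ^ (1 / q))
          = d ij.1 * e ij.2 * (m ij.1 ij.2 ^ (1 / pr) * m ij.1 ij.2 ^ (1 / q)) := by ring
        _ = d ij.1 * e ij.2 * m ij.1 ij.2 := by rw [hmm]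
    have hfp : ∀ ij : n × n, (d ij.1 * m ij.1 ij.2 ^ (1 / pr)) ^ pr
        = d ij.1 ^ pr * m ij.1 ij.2 := by
      intro ij
      rw [Real.mul_rpow (hd0 _) (Real.rpow_nonneg (hm0 _ _) _), ← Real.rpow_mul (hm0 _ _),
        one_div_mul_cancel hpr0, Real.rpow_one]
    have hgq : ∀ ij : n × n, (e ij.2 * m ij.1 ij.2 ^ (1 / q)) ^ q
        = e ij.2 ^ q * m ij.1 ij.2 := by
      intro ij
      rw [Real.mul_rpow (he0 _) (Real.rpow_nonneg (hm0 _ _) _), ← Real.rpow_mul (hm0 _ _),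
        one_div_mul_cancel hq0, Real.rpow_one]
    have hL : ∑ i, ∑ j, d i * e j * m i j
        ≤ (∑ ij : n × n, d ij.1 ^ pr * m ij.1 ij.2) ^ (1 / pr)
          * (∑ ij : n × n, e ij.2 ^ q * m ij.1 ij.2) ^ (1 / q) := by
      have hpair : (∑ ij : n × n, d ij.1 * e ij.2 * m ij.1 ij.2)
          = ∑ i, ∑ j, d i * e j * m i j := Fintype.sum_prod_type _
      rw [← hpair]
      calc ∑ ij : n × n, d ij.1 * e ij.2 * m ij.1 ij.2
          = ∑ ij : n × n, (d ij.1 * m ij.1 ij.2 ^ (1 / pr)) * (e ij.2 * m ij.1 ij.2 ^ (1 / q)) :=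
            (Finset.sum_congr rfl fun ij _ => (hfg ij).symm)
        _ ≤ _ := by
            refine hhold.trans ?_
            rw [Finset.sum_congr rfl fun ij _ => hfp ij, Finset.sum_congr rfl fun ij _ => hgq ij]
    refine hL.trans ?_
    have hP : (∑ ij : n × n, d ij.1 ^ pr * m ij.1 ij.2) ^ (1 / pr)
        ≤ (∑ i, d i ^ pr) ^ (1 / pr) := by
      refine Real.rpow_le_rpow (Finset.sum_nonneg fun ij _ =>
        mul_nonneg (Real.rpow_nonneg (hd0 _) _) (hm0 _ _)) ?_ (le_of_lt (one_div_pos.mpr hprpos))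
      rw [Fintype.sum_prod_type]
      calc ∑ i, ∑ j, d i ^ pr * m i j = ∑ i, d i ^ pr * ∑ j, m i j := by
            exact Finset.sum_congr rfl fun i _ => (Finset.mul_sum _ _ _).symm
        _ ≤ ∑ i, d i ^ pr * 1 := Finset.sum_le_sum fun i _ =>
            mul_le_mul_of_nonneg_left (hrow i) (Real.rpow_nonneg (hd0 _) _)
        _ = ∑ i, d i ^ pr := by simp
    have hQ : (∑ ij : n × n, e ij.2 ^ q * m ij.1 ij.2) ^ (1 / q) ≤ 1 := by
      refine Real.rpow_le_one (Finset.sum_nonneg fun ij _ =>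
        mul_nonneg (Real.rpow_nonneg (he0 _) _) (hm0 _ _)) ?_ (le_of_lt (one_div_pos.mpr hqpos))
      rw [Fintype.sum_prod_type]
      calc ∑ i, ∑ j, e j ^ q * m i j = ∑ j, ∑ i, e j ^ q * m i j := Finset.sum_comm
        _ = ∑ j, e j ^ q * ∑ i, m i j := Finset.sum_congr rfl fun j _ =>
            (Finset.mul_sum _ _ _).symm
        _ ≤ ∑ j, e j ^ q * 1 := Finset.sum_le_sum fun j _ =>
            mul_le_mul_of_nonneg_left (hcol j) (Real.rpow_nonneg (he0 _) _)
        _ ≤ 1 := by simpa using he2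
    calc (∑ ij : n × n, d ij.1 ^ pr * m ij.1 ij.2) ^ (1 / pr)
          * (∑ ij : n × n, e ij.2 ^ q * m ij.1 ij.2) ^ (1 / q)
        ≤ (∑ i, d i ^ pr) ^ (1 / pr) * 1 := by
          refine mul_le_mul hP hQ (Real.rpow_nonneg (Finset.sum_nonneg fun ij _ =>
            mul_nonneg (Real.rpow_nonneg (he0 _) _) (hm0 _ _)) _)
            (Real.rpow_nonneg (Finset.sum_nonneg fun i _ => Real.rpow_nonneg (hd0 _) _) _)
      _ = (∑ i, d i ^ pr) ^ (1 / pr) := by rw [mul_one]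
  · -- pr = 1
    subst hpr1
    have he1 : ∀ j, e j ≤ 1 := hecon.2 rfl
    have hstep : ∑ i, ∑ j, d i * e j * m i j ≤ ∑ i, d i := by
      calc ∑ i, ∑ j, d i * e j * m i j ≤ ∑ i, ∑ j, d i * m i j := by
            refine Finset.sum_le_sum fun i _ => Finset.sum_le_sum fun j _ => ?_
            calc d i * e j * m i j = d i * m i j * e j := by ring
              _ ≤ d i * m i j * 1 := by
                  refine mul_le_mul_of_nonneg_left (he1 j) (mul_nonneg (hd0 i) (hm0 i j))
              _ = d i * m i j := by rw [mul_one]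
        _ = ∑ i, d i * ∑ j, m i j := Finset.sum_congr rfl fun i _ => (Finset.mul_sum _ _ _).symm
        _ ≤ ∑ i, d i * 1 := Finset.sum_le_sum fun i _ =>
            mul_le_mul_of_nonneg_left (hrow i) (hd0 i)
        _ = ∑ i, d i := by simp
    refine hstep.trans ?_
    simp [Real.rpow_one]

/-- Existence of a dual witness attaining the Schatten norm. -/
theorem exists_dual_witness {pr : ℝ} (hpr : 1 ≤ pr) (M : Matrix n n ℂ)
    (hcne : (∑ i, svs M i ^ pr) ^ (1 / pr) ≠ 0) :
    ∃ N : Matrix n n ℂ, InDual pr N ∧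
      (M * N).trace = (((∑ i, svs M i ^ pr) ^ (1 / pr) : ℝ) : ℂ) := by
  have hpr0 : pr ≠ 0 := by positivity
  obtain ⟨U, V, hU, hV, hM⟩ := exists_svd M
  set d := svs M with hd
  have hd0 : ∀ i, 0 ≤ d i := svs_nonneg M
  set S := ∑ i, d i ^ pr with hS
  have hS0 : 0 ≤ S := Finset.sum_nonneg fun i _ => Real.rpow_nonneg (hd0 i) _
  set c := S ^ (1 / pr) with hc'
  have hc0 : 0 ≤ c := Real.rpow_nonneg hS0 _
  have hcpos : 0 < c := lt_of_le_of_ne hc0 (Ne.symm hcne)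
  have hcp : c ^ pr = S := by
    rw [hc', ← Real.rpow_mul hS0, one_div_mul_cancel hpr0, Real.rpow_one]
  set e : n → ℝ := fun i => (d i / c) ^ (pr - 1) with he
  have he0 : ∀ i, 0 ≤ e i := fun i => Real.rpow_nonneg (div_nonneg (hd0 i) hc0) _
  have htr : (M * (V * Matrix.diagonal (fun j => (e j : ℂ)) * Uᴴ)).trace
      = ∑ i, ((d i : ℂ) * (e i : ℂ)) := by
    conv_lhs => rw [hM]
    have h1 : (U * Matrix.diagonal (fun i => (d i : ℂ)) * Vᴴ) *
        (V * Matrix.diagonal (fun j => (e j : ℂ)) * Uᴴ)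
        = U * (Matrix.diagonal (fun i => (d i : ℂ)) * Matrix.diagonal (fun j => (e j : ℂ))) * Uᴴ
        := by
      calc (U * Matrix.diagonal (fun i => (d i : ℂ)) * Vᴴ) *
          (V * Matrix.diagonal (fun j => (e j : ℂ)) * Uᴴ)
          = U * (Matrix.diagonal (fun i => (d i : ℂ)) * ((Vᴴ * V) *
            (Matrix.diagonal (fun j => (e j : ℂ)) * Uᴴ))) := by simp only [mul_assoc]
        _ = U * (Matrix.diagonal (fun i => (d i : ℂ)) * Matrix.diagonal (fun j => (e j : ℂ))) * Uᴴ
            := by rw [hV.1, one_mul]; simp only [mul_assoc]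
    rw [h1, Matrix.trace_mul_cycle]
    rw [show Uᴴ * U * ((Matrix.diagonal fun i => (d i : ℂ)) * Matrix.diagonal fun j => (e j : ℂ))
      = (Matrix.diagonal fun i => (d i : ℂ)) * Matrix.diagonal fun j => (e j : ℂ) by
        rw [hU.1, one_mul]]
    rw [Matrix.diagonal_mul_diagonal, Matrix.trace_diagonal]
  have hde : ∀ i, d i * e i = d i ^ pr / c ^ (pr - 1) := by
    intro i
    have hne : (1:ℝ) + (pr - 1) ≠ 0 := by
      rw [show (1:ℝ) + (pr - 1) = pr by ring]; exact hpr0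
    simp only [he]
    rw [Real.div_rpow (hd0 i) hc0]
    rw [show d i * (d i ^ (pr - 1) / c ^ (pr - 1)) = (d i ^ (1:ℝ) * d i ^ (pr - 1)) / c ^ (pr - 1)
      by rw [Real.rpow_one]; ring]
    rw [← Real.rpow_add' (hd0 i) hne, show (1:ℝ) + (pr - 1) = pr by ring]
  have hsum : ∑ i, d i * e i = c := by
    rw [Finset.sum_congr rfl fun i _ => hde i, ← Finset.sum_div, ← hS, ← hcp,
      ← Real.rpow_sub hcpos, show pr - (pr - 1) = (1:ℝ) by ring, Real.rpow_one]
  refine ⟨V * Matrix.diagonal (fun j => (e j : ℂ)) * Uᴴ, ⟨V, U, e, hV, hU, he0, ⟨?_, ?_⟩, rfl⟩, ?_⟩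
  · intro hpr1
    have hpr1' : pr - 1 ≠ 0 := ne_of_gt (by linarith)
    have hq : ∀ i, e i ^ (pr / (pr - 1)) = (d i / c) ^ pr := by
      intro i
      simp only [he]
      rw [← Real.rpow_mul (div_nonneg (hd0 i) hc0)]
      congr 1
      field_simp
    rw [Finset.sum_congr rfl fun i _ => hq i,
      Finset.sum_congr rfl fun i _ => Real.div_rpow (hd0 i) hc0 (z := pr),
      ← Finset.sum_div, ← hS, hcp]
    have hSne : S ≠ 0 := by
      rw [← hcp]; exact ne_of_gt (Real.rpow_pos_of_pos hcpos _)
    rw [div_self hSne]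
  · intro hpr1
    intro i
    simp only [he, hpr1]
    norm_num
  · rw [htr]
    have hcast : ∑ i, ((d i : ℂ) * (e i : ℂ)) = ((∑ i, d i * e i : ℝ) : ℂ) := by
      push_cast; rfl
    rw [hcast, hsum]

/-- `schattenNorm` for finite `p` in terms of singular values. -/
lemma schattenNorm_eq_snF {p : ℝ≥0∞} (hp : p ≠ ⊤) (M : Matrix n n ℂ) :
    schattenNorm p M = (∑ i, svs M i ^ p.toReal) ^ (1 / p.toReal) := by
  simp only [schattenNorm, if_neg hp]; rfl

lemma schattenNorm_top (M : Matrix n n ℂ) : schattenNorm ⊤ M = opNorm M := by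
  unfold schattenNorm
  rw [if_pos rfl]

lemma one_le_toReal {p : ℝ≥0∞} (hp : 1 ≤ p) (hptop : p ≠ ⊤) : 1 ≤ p.toReal := by
  have := ENNReal.toReal_mono hptop hp
  simpa using this

theorem sn_nonneg (p : ℝ≥0∞) (M : Matrix n n ℂ) : 0 ≤ schattenNorm p M := by
  by_cases hptop : p = ⊤
  · subst hptop; rw [schattenNorm_top]; exact norm_nonneg _
  · rw [schattenNorm_eq_snF hptop]
    exact Real.rpow_nonneg (Finset.sum_nonneg fun i _ =>
      Real.rpow_nonneg (svs_nonneg M i) _) _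

lemma toCLM_unitary_isometry {W : Matrix n n ℂ} (hW : IsUnitaryM W)
    (x : EuclideanSpace ℂ n) : ‖(Matrix.toEuclideanCLM (𝕜 := ℂ) W) x‖ = ‖x‖ := by
  set f := Matrix.toEuclideanCLM (𝕜 := ℂ) (n := n)
  have hmul : f Wᴴ * f W = 1 := by
    rw [← _root_.map_mul, hW.1, _root_.map_one]
  have hcomp : (f Wᴴ) ((f W) x) = x := by
    calc (f Wᴴ) ((f W) x) = ((f Wᴴ) * (f W)) x := rfl
      _ = x := by rw [hmul]; rfl
  have hstar : star (f W) = f Wᴴ := by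
    rw [← map_star]; rfl
  have hinner : inner ℂ ((f W) x) ((f W) x) = inner ℂ x x := by
    calc inner ℂ ((f W) x) ((f W) x)
        = inner ℂ x ((ContinuousLinearMap.adjoint (f W)) ((f W) x)) :=
          (ContinuousLinearMap.adjoint_inner_right _ _ _).symm
      _ = inner ℂ x ((star (f W)) ((f W) x)) := by rw [ContinuousLinearMap.star_eq_adjoint]
      _ = inner ℂ x x := by rw [hstar, hcomp]
  rw [norm_eq_sqrt_re_inner (𝕜 := ℂ), norm_eq_sqrt_re_inner (𝕜 := ℂ) x, hinner]

lemma opNorm_mul_unitary (M : Matrix n n ℂ) {W : Matrix n n ℂ} (hW : IsUnitaryM W) :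
    opNorm (M * W) = opNorm M := by
  set f := Matrix.toEuclideanCLM (𝕜 := ℂ) (n := n)
  refine le_antisymm ?_ ?_
  · refine ContinuousLinearMap.opNorm_le_bound _ (norm_nonneg _) fun x => ?_
    have h1 : (f (M * W)) x = (f M) ((f W) x) := by rw [_root_.map_mul]; rfl
    rw [h1]
    calc ‖(f M) ((f W) x)‖ ≤ ‖f M‖ * ‖(f W) x‖ := ContinuousLinearMap.le_opNorm _ _
      _ = ‖f M‖ * ‖x‖ := by rw [toCLM_unitary_isometry hW]
  · refine ContinuousLinearMap.opNorm_le_bound _ (norm_nonneg _) fun x => ?_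
    have h0 : M = (M * W) * Wᴴ := by rw [mul_assoc, hW.2, mul_one]
    have h1 : (f M) x = (f (M * W)) ((f Wᴴ) x) := by
      conv_lhs => rw [h0]
      rw [_root_.map_mul]; rfl
    rw [h1]
    calc ‖(f (M * W)) ((f Wᴴ) x)‖ ≤ ‖f (M * W)‖ * ‖(f Wᴴ) x‖ :=
        ContinuousLinearMap.le_opNorm _ _
      _ = ‖f (M * W)‖ * ‖x‖ := by rw [toCLM_unitary_isometry (unit_ct hW)]

lemma opNorm_unitary_mul {W : Matrix n n ℂ} (hW : IsUnitaryM W) (M : Matrix n n ℂ) :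
    opNorm (W * M) = opNorm M := by
  set f := Matrix.toEuclideanCLM (𝕜 := ℂ) (n := n)
  refine le_antisymm ?_ ?_
  · refine ContinuousLinearMap.opNorm_le_bound _ (norm_nonneg _) fun x => ?_
    have h1 : (f (W * M)) x = (f W) ((f M) x) := by rw [_root_.map_mul]; rfl
    rw [h1, toCLM_unitary_isometry hW]
    exact ContinuousLinearMap.le_opNorm _ _
  · refine ContinuousLinearMap.opNorm_le_bound _ (norm_nonneg _) fun x => ?_
    have h0 : M = Wᴴ * (W * M) := by rw [← mul_assoc, hW.1, one_mul]
    have h1 : (f M) x = (f Wᴴ) ((f (W * M)) x) := by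
      conv_lhs => rw [h0]
      rw [_root_.map_mul]; rfl
    rw [h1, toCLM_unitary_isometry (unit_ct hW)]
    exact ContinuousLinearMap.le_opNorm _ _

theorem sn_conj_le {p : ℝ≥0∞} (hp : 1 ≤ p) {W₁ W₂ : Matrix n n ℂ}
    (h1 : IsUnitaryM W₁) (h2 : IsUnitaryM W₂) (M : Matrix n n ℂ) :
    schattenNorm p (W₁ * M * W₂) ≤ schattenNorm p M := by
  by_cases hptop : p = ⊤
  · subst hptop
    rw [schattenNorm_top, schattenNorm_top, opNorm_mul_unitary _ h2, opNorm_unitary_mul h1]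
  · have hpr : 1 ≤ p.toReal := one_le_toReal hp hptop
    rcases eq_or_ne (schattenNorm p (W₁ * M * W₂)) 0 with h0 | h0
    · rw [h0]; exact sn_nonneg p M
    · rw [schattenNorm_eq_snF hptop] at h0 ⊢
      rw [schattenNorm_eq_snF hptop]
      obtain ⟨N, hN, htr⟩ := exists_dual_witness hpr (W₁ * M * W₂) h0
      have hnn : (0:ℝ) ≤ (∑ i, svs (W₁ * M * W₂) i ^ p.toReal) ^ (1 / p.toReal) :=
        Real.rpow_nonneg (Finset.sum_nonneg fun i _ =>
          Real.rpow_nonneg (svs_nonneg _ i) _) _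
      have habs : (∑ i, svs (W₁ * M * W₂) i ^ p.toReal) ^ (1 / p.toReal)
          = ‖(W₁ * M * W₂ * N).trace‖ := by
        rw [htr, Complex.norm_of_nonneg hnn]
      rw [habs]
      have hcyc : (W₁ * M * W₂ * N).trace = (M * (W₂ * N * W₁)).trace := by
        rw [show W₁ * M * W₂ * N = W₁ * (M * W₂ * N) by simp only [mul_assoc]]
        rw [Matrix.trace_mul_comm]
        rw [show M * W₂ * N * W₁ = M * (W₂ * N * W₁) by simp only [mul_assoc]]
      rw [hcyc]
      exact trace_le_snF hpr M _ (InDual_conj hN h2 h1)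

theorem sn_conj {p : ℝ≥0∞} (hp : 1 ≤ p) {W₁ W₂ : Matrix n n ℂ}
    (h1 : IsUnitaryM W₁) (h2 : IsUnitaryM W₂) (M : Matrix n n ℂ) :
    schattenNorm p (W₁ * M * W₂) = schattenNorm p M := by
  refine le_antisymm (sn_conj_le hp h1 h2 M) ?_
  have h := sn_conj_le hp (unit_ct h1) (unit_ct h2) (W₁ * M * W₂)
  have heq : W₁ᴴ * (W₁ * M * W₂) * W₂ᴴ = M := by
    rw [← mul_assoc, ← mul_assoc, h1.1, one_mul, mul_assoc, h2.2, mul_one]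
  rw [heq] at h
  exact h

theorem sn_mul_unitary {p : ℝ≥0∞} (hp : 1 ≤ p) (M : Matrix n n ℂ) {W : Matrix n n ℂ}
    (hW : IsUnitaryM W) : schattenNorm p (M * W) = schattenNorm p M := by
  have := sn_conj hp unit_one hW M
  rwa [one_mul] at this

theorem sn_unitary_mul {p : ℝ≥0∞} (hp : 1 ≤ p) {W : Matrix n n ℂ} (hW : IsUnitaryM W)
    (M : Matrix n n ℂ) : schattenNorm p (W * M) = schattenNorm p M := by
  have := sn_conj hp hW unit_one M
  rwa [mul_one] at this

theorem sn_sum_smul_le {p : ℝ≥0∞} (hp : 1 ≤ p) {ι : Type*} (s : Finset ι) (c : ι → ℂ)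
    (Ms : ι → Matrix n n ℂ) :
    schattenNorm p (∑ k ∈ s, c k • Ms k) ≤ ∑ k ∈ s, ‖c k‖ * schattenNorm p (Ms k) := by
  by_cases hptop : p = ⊤
  · subst hptop
    simp only [schattenNorm_top, opNorm]
    rw [map_sum]
    refine (norm_sum_le _ _).trans (Finset.sum_le_sum fun k _ => ?_)
    rw [_root_.map_smul]
    have hns := norm_smul (c k) (Matrix.toEuclideanCLM (𝕜 := ℂ) (Ms k))
    rw [hns]
  · have hpr : 1 ≤ p.toReal := one_le_toReal hp hptop
    rcases eq_or_ne (schattenNorm p (∑ k ∈ s, c k • Ms k)) 0 with h0 | h0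
    · rw [h0]
      exact Finset.sum_nonneg fun k _ => mul_nonneg (norm_nonneg _) (sn_nonneg p _)
    · rw [schattenNorm_eq_snF hptop] at h0 ⊢
      obtain ⟨N, hN, htr⟩ := exists_dual_witness hpr _ h0
      have hnn : (0:ℝ) ≤ (∑ i, svs (∑ k ∈ s, c k • Ms k) i ^ p.toReal) ^ (1 / p.toReal) :=
        Real.rpow_nonneg (Finset.sum_nonneg fun i _ =>
          Real.rpow_nonneg (svs_nonneg _ i) _) _
      rw [show (∑ i, svs (∑ k ∈ s, c k • Ms k) i ^ p.toReal) ^ (1 / p.toReal)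
          = ‖((∑ k ∈ s, c k • Ms k) * N).trace‖ by
        rw [htr, Complex.norm_of_nonneg hnn]]
      have hexp : ((∑ k ∈ s, c k • Ms k) * N).trace = ∑ k ∈ s, c k * ((Ms k * N).trace) := by
        rw [Finset.sum_mul, Matrix.trace_sum]
        refine Finset.sum_congr rfl fun k _ => ?_
        rw [Matrix.smul_mul, Matrix.trace_smul, smul_eq_mul]
      rw [hexp]
      refine (norm_sum_le _ _).trans (Finset.sum_le_sum fun k _ => ?_)
      rw [norm_mul]
      refine mul_le_mul_of_nonneg_left ?_ (norm_nonneg _)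
      rw [schattenNorm_eq_snF hptop]
      exact trace_le_snF hpr _ _ hN

theorem sn_add_le {p : ℝ≥0∞} (hp : 1 ≤ p) (X Y : Matrix n n ℂ) :
    schattenNorm p (X + Y) ≤ schattenNorm p X + schattenNorm p Y := by
  have h := sn_sum_smul_le hp Finset.univ (![1, 1] : Fin 2 → ℂ) ![X, Y]
  simpa [Fin.sum_univ_two] using h

theorem sn_sub_le {p : ℝ≥0∞} (hp : 1 ≤ p) (X Y : Matrix n n ℂ) :
    schattenNorm p (X - Y) ≤ schattenNorm p X + schattenNorm p Y := by
  have h := sn_sum_smul_le hp Finset.univ (![1, -1] : Fin 2 → ℂ) ![X, Y]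
  simpa [Fin.sum_univ_two, sub_eq_add_neg] using h


variable {Λ : Type} [Fintype Λ] [DecidableEq Λ]


/-- A single-site operator acting at site `i`. -/
def singleSite (i : Λ) (M : Matrix (Fin 2) (Fin 2) ℂ) : SpinOp Λ := fun a b =>
  if ∀ j, j ≠ i → a j = b j then M (a i) (b i) else 0

lemma fin2_cases (x : Fin 2) : x = 0 ∨ x = 1 := by omega

lemma update_ne_update (i : Λ) (a : SpinConf Λ) :
    Function.update a i 0 ≠ Function.update a i 1 := by
  intro h
  have := congrFun h i
  simp only [Function.update_self] at this
  exact absurd this (by decide)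

/-- Reduction of a sum over configurations to the two configurations agreeing with `a`
away from `i`. -/
lemma sum_conf_pair (i : Λ) (a : SpinConf Λ) (f : SpinConf Λ → ℂ)
    (hf : ∀ c, ¬(∀ j, j ≠ i → a j = c j) → f c = 0) :
    ∑ c, f c = ∑ x : Fin 2, f (Function.update a i x) := by
  have hsub : ∀ c ∈ (Finset.univ : Finset (SpinConf Λ)),
      c ∉ ({Function.update a i 0, Function.update a i 1} : Finset (SpinConf Λ)) → f c = 0 := by
    intro c _ hc
    refine hf c fun hall => hc ?_
    have hc' : c = Function.update a i (c i) := by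
      funext j
      rcases eq_or_ne j i with rfl | hji
      · rw [Function.update_self]
      · rw [Function.update_of_ne hji]
        exact (hall j hji).symm
    simp only [Finset.mem_insert, Finset.mem_singleton]
    rcases fin2_cases (c i) with h | h
    · left; rw [hc', h]
    · right; rw [hc', h]
  rw [← Finset.sum_subset (Finset.subset_univ _) hsub, Finset.sum_pair (update_ne_update i a),
    Fin.sum_univ_two]

lemma ss_mul_apply (i : Λ) (M : Matrix (Fin 2) (Fin 2) ℂ) (X : SpinOp Λ) (a b : SpinConf Λ) :
    (singleSite i M * X) a b = ∑ x : Fin 2, M (a i) x * X (Function.update a i x) b := by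
  rw [Matrix.mul_apply]
  rw [sum_conf_pair i a _ (fun c hc => by rw [singleSite, if_neg hc, zero_mul])]
  refine Finset.sum_congr rfl fun x _ => ?_
  congr 1
  rw [singleSite, if_pos fun j hj => (Function.update_of_ne hj _ _).symm, Function.update_self]

lemma mul_ss_apply (X : SpinOp Λ) (i : Λ) (M : Matrix (Fin 2) (Fin 2) ℂ) (a b : SpinConf Λ) :
    (X * singleSite i M) a b = ∑ y : Fin 2, X a (Function.update b i y) * M y (b i) := by
  rw [Matrix.mul_apply]
  rw [sum_conf_pair i b _ (fun c hc => ?_)]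
  · refine Finset.sum_congr rfl fun y _ => ?_
    congr 1
    rw [singleSite, if_pos fun j hj => Function.update_of_ne hj _ _, Function.update_self]
  · have : ¬(∀ j, j ≠ i → c j = b j) := fun hall => hc fun j hj => (hall j hj).symm
    rw [singleSite, if_neg this, mul_zero]

lemma ss_mul (i : Λ) (M N : Matrix (Fin 2) (Fin 2) ℂ) :
    singleSite i M * singleSite i N = singleSite (Λ := Λ) i (M * N) := by
  ext a b
  rw [ss_mul_apply]
  by_cases hab : ∀ j, j ≠ i → a j = b j
  · have hterm : ∀ x : Fin 2, singleSite i N (Function.update a i x) b = N x (b i) := by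
      intro x
      rw [singleSite, if_pos fun j hj => by
        rw [Function.update_of_ne hj]; exact hab j hj, Function.update_self]
    rw [Finset.sum_congr rfl fun x _ => by rw [hterm x]]
    rw [singleSite, if_pos hab, Matrix.mul_apply]
  · have hterm : ∀ x : Fin 2, singleSite i N (Function.update a i x) b = 0 := by
      intro x
      rw [singleSite, if_neg]
      intro hall
      exact hab fun j hj => by
        have := hall j hj
        rwa [Function.update_of_ne hj] at this
    rw [Finset.sum_congr rfl fun x _ => by rw [hterm x, mul_zero]]
    rw [singleSite, if_neg hab, Finset.sum_const_zero]

lemma ss_one (i : Λ) : singleSite (Λ := Λ) i 1 = 1 := by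
  ext a b
  rw [singleSite]
  by_cases hab : a = b
  · subst hab
    rw [if_pos fun j _ => rfl, Matrix.one_apply_eq, Matrix.one_apply_eq]
  · rw [Matrix.one_apply_ne hab]
    by_cases h1 : ∀ j, j ≠ i → a j = b j
    · rw [if_pos h1]
      refine Matrix.one_apply_ne fun h2 => hab (funext fun j => ?_)
      rcases eq_or_ne j i with rfl | hji
      · exact h2
      · exact h1 j hji
    · rw [if_neg h1]

lemma ss_ct (i : Λ) (M : Matrix (Fin 2) (Fin 2) ℂ) :
    (singleSite (Λ := Λ) i M)ᴴ = singleSite i Mᴴ := by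
  ext a b
  rw [Matrix.conjTranspose_apply, singleSite, singleSite]
  have hiff : (∀ j, j ≠ i → b j = a j) ↔ (∀ j, j ≠ i → a j = b j) :=
    forall_congr' fun j => imp_congr Iff.rfl eq_comm
  by_cases h : ∀ j, j ≠ i → a j = b j
  · rw [if_pos (hiff.mpr h), if_pos h, Matrix.conjTranspose_apply]
  · rw [if_neg (fun hh => h (hiff.mp hh)), if_neg h, star_zero]

/-- Pauli matrices square to one. -/
lemma pauli_mul_self (k : Fin 4) : pauli k * pauli k = 1 := by
  fin_cases k <;>
  · ext x y
    fin_cases x <;> fin_cases y <;>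
      simp [pauli, Matrix.mul_apply, Fin.sum_univ_two, Matrix.one_apply, Complex.I_mul_I] <;>
      ring_nf <;> simp [Complex.I_sq]

lemma pauli_herm (k : Fin 4) : (pauli k)ᴴ = pauli k := by
  fin_cases k <;>
  · ext x y
    fin_cases x <;> fin_cases y <;>
      simp [pauli, Matrix.conjTranspose_apply, Matrix.one_apply]

/-- The Pauli operator at site `i`. -/
def sigma (i : Λ) (k : Fin 4) : SpinOp Λ := singleSite i (pauli k)

lemma sigma_mul_self (i : Λ) (k : Fin 4) : sigma (Λ := Λ) i k * sigma i k = 1 := by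
  rw [sigma, ss_mul, pauli_mul_self, ss_one]

lemma sigma_unitary (i : Λ) (k : Fin 4) : IsUnitaryM (sigma (Λ := Λ) i k) := by
  have hct : (sigma (Λ := Λ) i k)ᴴ = sigma i k := by
    rw [sigma, ss_ct, pauli_herm]
  constructor <;> rw [hct] <;> exact sigma_mul_self i k

lemma sigma_supported (i : Λ) (k : Fin 4) : IsSupportedOn (sigma (Λ := Λ) i k) ({i} : Finset Λ) := by
  constructor
  · rintro a b ⟨j, hj, hne⟩
    rw [Finset.mem_singleton] at hj
    rw [sigma, singleSite, if_neg]
    intro hall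
    exact hne (hall j hj)
  · intro a b a' b' ha hb hab hab'
    have hai : a i = a' i := ha i (Finset.mem_singleton_self i)
    have hbi : b i = b' i := hb i (Finset.mem_singleton_self i)
    have h1 : ∀ j, j ≠ i → a j = b j := fun j hj =>
      hab j (by rwa [Finset.mem_singleton])
    have h2 : ∀ j, j ≠ i → a' j = b' j := fun j hj =>
      hab' j (by rwa [Finset.mem_singleton])
    rw [sigma, singleSite, singleSite, if_pos h1, if_pos h2, hai, hbi]

lemma ss_mul_ss_apply {ii jj : Λ} (hne : ii ≠ jj) (M N : Matrix (Fin 2) (Fin 2) ℂ)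
    (a b : SpinConf Λ) :
    (singleSite ii M * singleSite jj N) a b
      = (if ∀ kk, kk ≠ ii → kk ≠ jj → a kk = b kk then 1 else 0)
          * (M (a ii) (b ii) * N (a jj) (b jj)) := by
  rw [ss_mul_apply]
  have hterm : ∀ x : Fin 2, M (a ii) x * singleSite jj N (Function.update a ii x) b
      = if x = b ii then
          ((if ∀ kk, kk ≠ ii → kk ≠ jj → a kk = b kk then 1 else 0)
            * (M (a ii) x * N (a jj) (b jj))) else 0 := by
    intro x
    rw [singleSite]
    by_cases hx : x = b ii
    · rw [if_pos hx]
      by_cases hC : ∀ kk, kk ≠ ii → kk ≠ jj → a kk = b kk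
      · rw [if_pos, if_pos hC, Function.update_of_ne (Ne.symm hne)]
        · ring
        · intro kk hkk
          rcases eq_or_ne kk ii with rfl | h2
          · rw [Function.update_self]; exact hx
          · rw [Function.update_of_ne h2]; exact hC kk h2 hkk
      · rw [if_neg, if_neg hC]
        · simp
        · intro hall
          apply hC
          intro kk h2 h3
          have := hall kk h3
          rwa [Function.update_of_ne h2] at this
    · rw [if_neg hx, if_neg]
      · simp
      · intro hall
        have := hall ii hne
        rw [Function.update_self] at this
        exact hx this
  rw [Finset.sum_congr rfl fun x _ => hterm x, Finset.sum_ite_eq' Finset.univ (b ii)]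
  rw [if_pos (Finset.mem_univ _)]

lemma sigma_comm {i j : Λ} (hij : i ≠ j) (k l : Fin 4) :
    sigma (Λ := Λ) i k * sigma j l = sigma j l * sigma i k := by
  ext a b
  rw [sigma, sigma, ss_mul_ss_apply hij, ss_mul_ss_apply (Ne.symm hij)]
  have hiff : (∀ kk, kk ≠ i → kk ≠ j → a kk = b kk) ↔ (∀ kk, kk ≠ j → kk ≠ i → a kk = b kk) :=
    ⟨fun h kk h1 h2 => h kk h2 h1, fun h kk h1 h2 => h kk h2 h1⟩
  rw [if_congr hiff rfl rfl]
  ring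

lemma pauli_sum_id (u x y v : Fin 2) :
    ∑ k : Fin 4, pauli k u x * pauli k y v
      = 2 * (if u = v then 1 else 0) * (if x = y then 1 else 0) := by
  fin_cases u <;> fin_cases x <;> fin_cases y <;> fin_cases v <;>
    simp [pauli, Fin.sum_univ_four, Matrix.one_apply, Complex.I_mul_I] <;> ring_nf <;>
    simp [Complex.I_sq]

/-- Normalized single-site partial trace (tensored with the identity at `i`). -/
def ptr (i : Λ) (B : SpinOp Λ) : SpinOp Λ := fun a b =>
  (if a i = b i then 1 else 0) * (2 : ℂ)⁻¹
    * ∑ x : Fin 2, B (Function.update a i x) (Function.update b i x)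

theorem twirl_eq_ptr (i : Λ) (B : SpinOp Λ) :
    (4 : ℂ)⁻¹ • ∑ k : Fin 4, sigma i k * B * sigma i k = ptr i B := by
  ext a b
  have hterm : ∀ k : Fin 4, (sigma i k * B * sigma i k) a b
      = ∑ y : Fin 2, ∑ x : Fin 2,
          (pauli k (a i) x * pauli k y (b i))
            * B (Function.update a i x) (Function.update b i y) := by
    intro k
    rw [sigma, mul_ss_apply]
    refine Finset.sum_congr rfl fun y _ => ?_
    rw [ss_mul_apply, Finset.sum_mul]
    refine Finset.sum_congr rfl fun x _ => by ring
  simp only [Matrix.smul_apply, Matrix.sum_apply, smul_eq_mul]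
  rw [Finset.sum_congr rfl fun k (_ : k ∈ Finset.univ) => hterm k]
  rw [Finset.sum_comm]
  rw [Finset.sum_congr rfl fun y (_ : y ∈ (Finset.univ : Finset (Fin 2))) => Finset.sum_comm]
  have hin : ∀ y x : Fin 2, ∑ k : Fin 4, (pauli k (a i) x * pauli k y (b i))
        * B (Function.update a i x) (Function.update b i y)
      = (2 * (if a i = b i then 1 else 0) * (if x = y then 1 else 0))
        * B (Function.update a i x) (Function.update b i y) := by
    intro y x
    rw [← Finset.sum_mul, pauli_sum_id]
  rw [Finset.sum_congr rfl fun y (_ : y ∈ (Finset.univ : Finset (Fin 2))) =>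
    Finset.sum_congr rfl fun x _ => hin y x]
  have hcol : ∀ y : Fin 2, ∑ x : Fin 2, (2 * (if a i = b i then 1 else 0)
        * (if x = y then 1 else 0)) * B (Function.update a i x) (Function.update b i y)
      = 2 * (if a i = b i then 1 else 0)
          * B (Function.update a i y) (Function.update b i y) := by
    intro y
    rw [Finset.sum_congr rfl fun x (_ : x ∈ (Finset.univ : Finset (Fin 2))) =>
      show (2 * (if a i = b i then 1 else 0) * (if x = y then 1 else 0))
          * B (Function.update a i x) (Function.update b i y)
        = if x = y then (2 * (if a i = b i then 1 else 0)
            * B (Function.update a i x) (Function.update b i y)) else 0 from by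
        by_cases hxy : x = y <;> simp [hxy]]
    rw [Finset.sum_ite_eq' Finset.univ y, if_pos (Finset.mem_univ _)]
  rw [Finset.sum_congr rfl fun y (_ : y ∈ (Finset.univ : Finset (Fin 2))) => hcol y]
  rw [ptr, ← Finset.mul_sum]
  ring

/-- The spin-flip equivalence at site `i`. -/
def flipAt (i : Λ) : SpinConf Λ ≃ SpinConf Λ where
  toFun c := Function.update c i (c i + 1)
  invFun c := Function.update c i (c i + 1)
  left_inv c := by
    funext j
    dsimp only
    rcases eq_or_ne j i with rfl | hji
    · rw [Function.update_self, Function.update_self]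
      rcases fin2_cases (c j) with h | h <;> rw [h] <;> decide
    · rw [Function.update_of_ne hji, Function.update_of_ne hji]
  right_inv c := by
    funext j
    dsimp only
    rcases eq_or_ne j i with rfl | hji
    · rw [Function.update_self, Function.update_self]
      rcases fin2_cases (c j) with h | h <;> rw [h] <;> decide
    · rw [Function.update_of_ne hji, Function.update_of_ne hji]

lemma half_sum (i : Λ) (G : Fin 2 → SpinConf Λ → ℂ)
    (hG : ∀ x c y, G x (Function.update c i y) = G x c) :
    ∑ c, G (c i) c = (2 : ℂ)⁻¹ * ∑ x : Fin 2, ∑ c, G x c := by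
  have hsplit : ∀ x : Fin 2, ∑ c, G x c = 2 * ∑ c, (if c i = x then G x c else 0) := by
    intro x
    have h1 : ∑ c, G x c
        = ∑ c, ((if c i = x then G x c else 0) + (if c i ≠ x then G x c else 0)) := by
      refine Finset.sum_congr rfl fun c _ => ?_
      by_cases h : c i = x <;> simp [h]
    rw [h1, Finset.sum_add_distrib]
    have h2 : ∑ c, (if c i ≠ x then G x c else 0) = ∑ c, (if c i = x then G x c else 0) := by
      rw [← Equiv.sum_comp (flipAt i) (fun c => if c i ≠ x then G x c else 0)]
      refine Finset.sum_congr rfl fun c _ => ?_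
      have hfa : flipAt i c = Function.update c i (c i + 1) := rfl
      have hflip_i : (flipAt i c) i = c i + 1 := by
        rw [hfa]; exact Function.update_self _ _ _
      have hGval : G x (flipAt i c) = G x c := by
        rw [hfa]; exact hG x c _
      have hiff : ((flipAt i c) i ≠ x) ↔ (c i = x) := by
        rw [hflip_i]
        rcases fin2_cases (c i) with h | h <;> rcases fin2_cases x with h' | h' <;>
          rw [h, h'] <;> decide
      by_cases h : c i = x
      · rw [if_pos (hiff.mpr h), if_pos h, hGval]
      · rw [if_neg (fun hh => h (hiff.mp hh)), if_neg h]
    rw [h2]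
    ring
  calc ∑ c, G (c i) c = ∑ c, ∑ x : Fin 2, (if c i = x then G x c else 0) := by
        refine Finset.sum_congr rfl fun c _ => ?_
        rw [Finset.sum_ite_eq Finset.univ (c i) (fun x => G x c), if_pos (Finset.mem_univ _)]
    _ = ∑ x : Fin 2, ∑ c, (if c i = x then G x c else 0) := Finset.sum_comm
    _ = ∑ x : Fin 2, (2 : ℂ)⁻¹ * ∑ c, G x c := by
        refine Finset.sum_congr rfl fun x _ => ?_
        rw [hsplit x]
        ring
    _ = (2 : ℂ)⁻¹ * ∑ x : Fin 2, ∑ c, G x c := by rw [← Finset.mul_sum]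

lemma localize_univ (A : SpinOp Λ) : localize A Finset.univ = A := by
  ext a b
  rw [localize]
  rw [if_pos (fun i hi => absurd (Finset.mem_univ i) hi)]
  have h1 : ∀ c : SpinConf Λ, A (fun i => if i ∈ Finset.univ then a i else c i)
      (fun i => if i ∈ Finset.univ then b i else c i) = A a b := by
    intro c
    congr 1 <;> funext j <;> simp
  rw [Finset.sum_congr rfl fun c _ => h1 c, Finset.sum_const, Finset.card_univ]
  have hcard : Fintype.card (SpinConf Λ) = 2 ^ Fintype.card Λ := by
    simp [Fintype.card_fun]
  rw [hcard, nsmul_eq_mul]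
  have h2 : ((2 : ℂ) ^ Fintype.card Λ) ≠ 0 := pow_ne_zero _ two_ne_zero
  push_cast
  field_simp

lemma localize_insert (A : SpinOp Λ) (S : Finset Λ) {i : Λ} (hi : i ∉ S) :
    localize A (insert i S)ᶜ = ptr i (localize A Sᶜ) := by
  ext a b
  set G : Fin 2 → SpinConf Λ → ℂ := fun x c =>
    A (fun j => if j ∈ Sᶜ then Function.update a i x j else c j)
      (fun j => if j ∈ Sᶜ then Function.update b i x j else c j) with hGdef
  have hiSc : i ∈ Sᶜ := Finset.mem_compl.mpr hi
  have hG : ∀ x c y, G x (Function.update c i y) = G x c := by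
    intro x c y
    simp only [hGdef]
    congr 1 <;> funext j <;>
    · by_cases hj : j ∈ Sᶜ
      · rw [if_pos hj, if_pos hj]
      · have hji : j ≠ i := fun h => hj (h ▸ hiSc)
        rw [if_neg hj, if_neg hj, Function.update_of_ne hji]
  have hfm : ∀ c : SpinConf Λ,
      A (fun j => if j ∈ (insert i S)ᶜ then a j else c j)
        (fun j => if j ∈ (insert i S)ᶜ then b j else c j) = G (c i) c := by
    intro c
    simp only [hGdef]
    congr 1 <;> funext j <;>
    · rcases eq_or_ne j i with rfl | hji
      · rw [if_neg (fun h => (Finset.mem_compl.mp h) (Finset.mem_insert_self j S)),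
          if_pos hiSc, Function.update_self]
      · by_cases hj : j ∈ Sᶜ
        · rw [if_pos (Finset.mem_compl.mpr fun h =>
            (Finset.mem_compl.mp hj) ((Finset.mem_insert.mp h).resolve_left hji)),
            if_pos hj, Function.update_of_ne hji]
        · rw [if_neg (fun h => hj (Finset.mem_compl.mpr fun h2 =>
            (Finset.mem_compl.mp h) (Finset.mem_insert_of_mem h2))), if_neg hj]
  have hSind : ∀ x : Fin 2, (∀ j ∉ Sᶜ, Function.update a i x j = Function.update b i x j)
      ↔ (∀ j ∈ S, a j = b j) := by
    intro x
    constructor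
    · intro h j hj
      have hji : j ≠ i := fun hh => hi (hh ▸ hj)
      have := h j (fun hc => (Finset.mem_compl.mp hc) hj)
      rwa [Function.update_of_ne hji, Function.update_of_ne hji] at this
    · intro h j hj
      rw [Finset.notMem_compl] at hj
      rcases eq_or_ne j i with rfl | hji
      · rw [Function.update_self, Function.update_self]
      · rw [Function.update_of_ne hji, Function.update_of_ne hji]
        exact h j hj
  have hindL : (∀ j ∉ (insert i S)ᶜ, a j = b j) ↔ ((a i = b i) ∧ ∀ j ∈ S, a j = b j) := by
    constructor
    · intro h
      refine ⟨h i (fun hc => (Finset.mem_compl.mp hc) (Finset.mem_insert_self i S)),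
        fun j hj => h j (fun hc => (Finset.mem_compl.mp hc) (Finset.mem_insert_of_mem hj))⟩
    · rintro ⟨h1, h2⟩ j hj
      rw [Finset.notMem_compl] at hj
      rcases Finset.mem_insert.mp hj with rfl | hj'
      · exact h1
      · exact h2 j hj'
  rw [ptr, localize]
  have hRHS : ∀ x : Fin 2, localize A Sᶜ (Function.update a i x) (Function.update b i x)
      = (if ∀ j ∈ S, a j = b j then (1:ℂ) else 0) * (∑ c, G x c) / (2 ^ Fintype.card Λ) := by
    intro x
    rw [localize]
    congr 1
    congr 1
    · exact if_congr (hSind x) rfl rfl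
  rw [Finset.sum_congr rfl fun x _ => hRHS x]
  by_cases hS : ∀ j ∈ S, a j = b j
  · by_cases hai : a i = b i
    · rw [if_pos (hindL.mpr ⟨hai, hS⟩), if_pos hai, one_mul]
      rw [Finset.sum_congr rfl fun c _ => hfm c]
      rw [half_sum i G hG]
      rw [Finset.sum_congr rfl fun x (_ : x ∈ (Finset.univ : Finset (Fin 2))) =>
        show (if ∀ j ∈ S, a j = b j then (1:ℂ) else 0) * (∑ c, G x c) / (2 ^ Fintype.card Λ)
          = (∑ c, G x c) / (2 ^ Fintype.card Λ) from by rw [if_pos hS, one_mul]]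
      rw [← Finset.sum_div]
      ring
    · rw [if_neg (fun h => hai (hindL.mp h).1), if_neg hai]
      simp
  · rw [if_neg (fun h => hS (hindL.mp h).2)]
    rw [Finset.sum_congr rfl fun x (_ : x ∈ (Finset.univ : Finset (Fin 2))) =>
      show (if ∀ j ∈ S, a j = b j then (1:ℂ) else 0) * (∑ c, G x c) / (2 ^ Fintype.card Λ)
        = 0 from by rw [if_neg hS, zero_mul, zero_div]]
    simp

lemma comm_ptr {i j : Λ} (hij : i ≠ j) (k : Fin 4) (B : SpinOp Λ) :
    commM (ptr j B) (sigma i k) = ptr j (commM B (sigma i k)) := by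
  rw [← twirl_eq_ptr, ← twirl_eq_ptr]
  rw [commM, Matrix.smul_mul, Matrix.mul_smul, ← smul_sub]
  congr 1
  rw [Finset.sum_mul, Finset.mul_sum, ← Finset.sum_sub_distrib]
  refine Finset.sum_congr rfl fun l _ => ?_
  have hc : sigma (Λ := Λ) j l * sigma i k = sigma i k * sigma j l := sigma_comm (Ne.symm hij) l k
  have h1 : sigma j l * B * sigma j l * sigma i k = sigma j l * (B * sigma i k) * sigma j l := by
    calc sigma j l * B * sigma j l * sigma i k
        = sigma j l * B * (sigma j l * sigma i k) := by rw [mul_assoc]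
      _ = sigma j l * B * (sigma i k * sigma j l) := by rw [hc]
      _ = sigma j l * B * sigma i k * sigma j l := by rw [← mul_assoc]
      _ = sigma j l * (B * sigma i k) * sigma j l := by rw [mul_assoc (sigma j l) B (sigma i k)]
  have h2 : sigma i k * (sigma j l * B * sigma j l) = sigma j l * (sigma i k * B) * sigma j l := by
    calc sigma i k * (sigma j l * B * sigma j l)
        = sigma i k * sigma j l * B * sigma j l := by
          rw [← mul_assoc, ← mul_assoc]
      _ = sigma j l * sigma i k * B * sigma j l := by rw [← hc]
      _ = sigma j l * (sigma i k * B) * sigma j l := by rw [mul_assoc (sigma j l) (sigma i k) B]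
  rw [h1, h2, commM, ← Matrix.sub_mul, ← Matrix.mul_sub]

lemma comm_localize (A : SpinOp Λ) (k : Fin 4) (S : Finset Λ) :
    ∀ i ∉ S, commM (localize A Sᶜ) (sigma i k) = localize (commM A (sigma i k)) Sᶜ := by
  induction S using Finset.induction_on with
  | empty =>
      intro i _
      rw [Finset.compl_empty, localize_univ, localize_univ]
  | @insert j S hj ih =>
      intro i hi
      have hij : i ≠ j := fun h => hi (h ▸ Finset.mem_insert_self j S)
      have hiS : i ∉ S := fun h => hi (Finset.mem_insert_of_mem h)
      rw [localize_insert A S hj, comm_ptr hij k, ih i hiS, ← localize_insert _ S hj]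

lemma sn_localize_le {p : ℝ≥0∞} (hp : 1 ≤ p) (A : SpinOp Λ) (S : Finset Λ) :
    schattenNorm p (localize A Sᶜ) ≤ schattenNorm p A := by
  induction S using Finset.induction_on with
  | empty => rw [Finset.compl_empty, localize_univ]
  | @insert j S hj ih =>
      rw [localize_insert A S hj, ← twirl_eq_ptr, Finset.smul_sum]
      refine le_trans (sn_sum_smul_le hp Finset.univ (fun _ => (4:ℂ)⁻¹)
        (fun l => sigma j l * localize A Sᶜ * sigma j l)) ?_
      have habs : ‖(4:ℂ)⁻¹‖ = (4:ℝ)⁻¹ := by norm_num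
      have hterm : ∀ l : Fin 4,
          ‖(4:ℂ)⁻¹‖ * schattenNorm p (sigma j l * localize A Sᶜ * sigma j l)
            = (4:ℝ)⁻¹ * schattenNorm p (localize A Sᶜ) := by
        intro l
        rw [habs, sn_conj hp (sigma_unitary j l) (sigma_unitary j l)]
      rw [Finset.sum_congr rfl fun l _ => hterm l, Finset.sum_const, Finset.card_univ,
        Fintype.card_fin, nsmul_eq_mul]
      calc (4:ℝ) * (4⁻¹ * schattenNorm p (localize A Sᶜ)) = schattenNorm p (localize A Sᶜ) := by
            ring
        _ ≤ schattenNorm p A := ih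

theorem main_bound {p : ℝ≥0∞} (hp : 1 ≤ p) (A : SpinOp Λ) (S : Finset Λ) :
    schattenNorm p (A - localize A Sᶜ) ≤
      ∑ i ∈ S, ⨆ U : {U : SpinOp Λ // IsUnitaryM U ∧ IsSupportedOn U {i}},
        schattenNorm p (commM A (U : SpinOp Λ)) := by
  induction S using Finset.induction_on with
  | empty =>
      rw [Finset.compl_empty, localize_univ, sub_self, Finset.sum_empty]
      have h := sn_sum_smul_le (n := SpinConf Λ) hp (∅ : Finset ℕ) (fun _ => 0) (fun _ => 0)
      simpa using h
  | @insert i S hiS ih =>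
      have hsupB : BddAbove (Set.range fun U : {U : SpinOp Λ // IsUnitaryM U ∧
          IsSupportedOn U {i}} => schattenNorm p (commM A (U : SpinOp Λ))) := by
        refine ⟨2 * schattenNorm p A, ?_⟩
        rintro x ⟨U, rfl⟩
        have h1 : schattenNorm p (commM A (U : SpinOp Λ))
            ≤ schattenNorm p (A * (U : SpinOp Λ)) + schattenNorm p ((U : SpinOp Λ) * A) :=
          sn_sub_le hp _ _
        rw [sn_mul_unitary hp A U.2.1, sn_unitary_mul hp U.2.1 A] at h1
        linarith
      have hsplit : A - localize A (insert i S)ᶜ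
          = (A - localize A Sᶜ) + (localize A Sᶜ - ptr i (localize A Sᶜ)) := by
        rw [localize_insert A S hiS]
        exact (sub_add_sub_cancel _ _ _).symm
      rw [hsplit, Finset.sum_insert hiS]
      set B := localize A Sᶜ with hBdef
      have hB : B - ptr i B = ∑ l : Fin 4, (4:ℂ)⁻¹ • (commM B (sigma i l) * sigma i l) := by
        rw [← twirl_eq_ptr]
        have hstep : (4:ℂ)⁻¹ • ∑ l : Fin 4, (B - sigma i l * B * sigma i l)
            = B - (4:ℂ)⁻¹ • ∑ l : Fin 4, sigma i l * B * sigma i l := by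
          rw [Finset.sum_sub_distrib, smul_sub]
          congr 1
          rw [Finset.sum_const, Finset.card_univ, Fintype.card_fin,
            ← Nat.cast_smul_eq_nsmul ℂ, smul_smul]
          norm_num
        rw [← hstep, Finset.smul_sum]
        refine Finset.sum_congr rfl fun l _ => ?_
        congr 1
        calc B - sigma i l * B * sigma i l
            = B * (sigma i l * sigma i l) - sigma i l * B * sigma i l := by
              rw [sigma_mul_self, mul_one]
          _ = (B * sigma i l - sigma i l * B) * sigma i l := by
              rw [Matrix.sub_mul, ← mul_assoc]
          _ = commM B (sigma i l) * sigma i l := rfl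
      have h2 : schattenNorm p (B - ptr i B) ≤
          ⨆ U : {U : SpinOp Λ // IsUnitaryM U ∧ IsSupportedOn U {i}},
            schattenNorm p (commM A (U : SpinOp Λ)) := by
        rw [hB]
        refine le_trans (sn_sum_smul_le hp Finset.univ (fun _ => (4:ℂ)⁻¹)
          (fun l => commM B (sigma i l) * sigma i l)) ?_
        have hterm : ∀ l : Fin 4,
            ‖(4:ℂ)⁻¹‖ * schattenNorm p (commM B (sigma i l) * sigma i l)
              ≤ (4:ℝ)⁻¹ * ⨆ U : {U : SpinOp Λ // IsUnitaryM U ∧ IsSupportedOn U {i}},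
                  schattenNorm p (commM A (U : SpinOp Λ)) := by
          intro l
          have habs : ‖(4:ℂ)⁻¹‖ = (4:ℝ)⁻¹ := by norm_num
          rw [habs, sn_mul_unitary hp _ (sigma_unitary i l), hBdef,
            comm_localize A l S i hiS]
          have hle : schattenNorm p (localize (commM A (sigma i l)) Sᶜ)
              ≤ schattenNorm p (commM A (sigma i l)) := sn_localize_le hp _ S
          have hsup : schattenNorm p (commM A (sigma i l))
              ≤ ⨆ U : {U : SpinOp Λ // IsUnitaryM U ∧ IsSupportedOn U {i}},
                  schattenNorm p (commM A (U : SpinOp Λ)) :=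
            le_ciSup hsupB ⟨sigma i l, sigma_unitary i l, sigma_supported i l⟩
          exact mul_le_mul_of_nonneg_left (hle.trans hsup) (by norm_num)
        refine le_trans (Finset.sum_le_sum fun l _ => hterm l) ?_
        rw [Finset.sum_const, Finset.card_univ, Fintype.card_fin, nsmul_eq_mul]
        exact le_of_eq (by push_cast; ring)
      exact le_trans (sn_add_le hp _ _)
        (le_trans (add_le_add ih h2) (le_of_eq (add_comm _ _)))


end LocE

end

/-- **Site-by-site bound on the partial-trace localization error:**
for every Schatten `p`-norm,
`‖A - (tr_{X̃^c}[A]/tr_{X̃^c} 1̂) ⊗ 1_{X̃^c}‖_p ≤ Σ_{i∈X̃^c} sup_{U_i} ‖[A,U_i]‖_p`,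
the supremum running over unitaries supported on the single site `{i}`. -/
theorem localization_error_site_by_site
    {Λ : Type} [Fintype Λ] [DecidableEq Λ]
    (A : SpinOp Λ) (Xt : Finset Λ) (p : ℝ≥0∞) (hp : 1 ≤ p) :
    schattenNorm p (A - localize A Xt)
      ≤ ∑ i ∈ Xtᶜ,
          ⨆ U : {U : SpinOp Λ // IsUnitaryM U ∧ IsSupportedOn U {i}},
            schattenNorm p (commM A (U : SpinOp Λ)) := by
  have h := LocE.main_bound hp A Xtᶜ
  rwa [compl_compl] at h
end
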